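/- arXiv:2603.22226 — 7 statements merged into one kernel-verified Lean document; each statement's English description precedes it below -/
import Mathlib

section
/- Let n ≥ 2 and let a_1 ≤ a_2 ≤ … ≤ a_n and b_1 ≤ b_2 ≤ … ≤ b_n be positive integers. Assume that ∏_{j=1}^n (1−q^{b_j}) divides ∏_{i=1}^n (1−q^{a_i}) in ℤ[q], and that 2·b_n·⌊b_{n−1}/2⌋ − b_1 < a_1. Then for every subset I ⊆ {1,…,n}, the number of indices i ∈ {1,…,n} (counted with multiplicity) such that a_i ∈ ⟨{b_j : j ∈ I}⟩ is at least #I. -/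
open scoped Classical

open Polynomial


private lemma binom_ne_zero {m : ℕ} (hm : 0 < m) : (1 - X ^ m : ℂ[X]) ≠ 0 := by
  intro h
  have := congrArg (Polynomial.eval 0) h
  simp [zero_pow hm.ne'] at this

private lemma rm_prod {s : Finset ℕ} {f : ℕ → ℂ[X]} (hf : ∀ i ∈ s, f i ≠ 0) (x : ℂ) :
    rootMultiplicity x (∏ i ∈ s, f i) = ∑ i ∈ s, rootMultiplicity x (f i) := by
  classical
  induction s using Finset.induction_on with
  | empty => simp [rootMultiplicity_eq_zero (by simp [IsRoot] : ¬ IsRoot (1:ℂ[X]) x)]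
  | @insert a s h ih =>
    rw [Finset.prod_insert h, Finset.sum_insert h,
      rootMultiplicity_mul (mul_ne_zero (hf a (Finset.mem_insert_self a s))
        (Finset.prod_ne_zero_iff.mpr fun i hi => hf i (Finset.mem_insert_of_mem hi))),
      ih (fun i hi => hf i (Finset.mem_insert_of_mem hi))]

private lemma rm_binom {d m : ℕ} (hd : 0 < d) (hm : 0 < m) {ζ : ℂ} (hζ : IsPrimitiveRoot ζ d) :
    rootMultiplicity ζ (1 - X ^ m : ℂ[X]) = if d ∣ m then 1 else 0 := by
  have hne : (1 - X ^ m : ℂ[X]) ≠ 0 := binom_ne_zero hm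
  by_cases h : d ∣ m
  · rw [if_pos h]
    have heq : (1 - X ^ m : ℂ[X]) = (-1) * (X ^ m - C 1) := by
      rw [Polynomial.C_1]; ring
    have hsep : (X ^ m - C 1 : ℂ[X]).Separable :=
      separable_X_pow_sub_C 1 (Nat.cast_ne_zero.mpr hm.ne') one_ne_zero
    have hne2 : (X ^ m - C 1 : ℂ[X]) ≠ 0 := by
      intro h2; apply hne; rw [heq, h2, mul_zero]
    have hroot : IsRoot (X ^ m - C 1 : ℂ[X]) ζ := by
      simp [IsRoot, (hζ.pow_eq_one_iff_dvd m).mpr h]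
    have h1 : rootMultiplicity ζ (X ^ m - C 1 : ℂ[X]) = 1 := by
      refine le_antisymm (rootMultiplicity_le_one_of_separable hsep ζ) ?_
      refine (le_rootMultiplicity_iff hne2).mpr ?_
      simpa [pow_one] using (dvd_iff_isRoot.mpr hroot)
    rw [heq, rootMultiplicity_mul (by rw [← heq]; exact hne),
      rootMultiplicity_eq_zero (by simp [IsRoot] : ¬ IsRoot (-1 : ℂ[X]) ζ), h1]
  · rw [if_neg h]
    refine rootMultiplicity_eq_zero ?_
    simp only [IsRoot, eval_sub, eval_one, eval_pow, eval_X]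
    intro hcon
    exact h ((hζ.pow_eq_one_iff_dvd m).mp (by linear_combination -hcon))

private lemma count_lemma (n : ℕ) (a b : ℕ → ℕ)
    (ha : ∀ i ∈ Finset.Icc 1 n, 0 < a i) (hb : ∀ i ∈ Finset.Icc 1 n, 0 < b i)
    (hdvd : (∏ j ∈ Finset.Icc 1 n, (1 - X ^ (b j)) : ℤ[X]) ∣
      ∏ i ∈ Finset.Icc 1 n, (1 - X ^ (a i)))
    (d : ℕ) (hd : 0 < d) :
    ((Finset.Icc 1 n).filter (fun j => d ∣ b j)).card ≤
      ((Finset.Icc 1 n).filter (fun i => d ∣ a i)).card := by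
  classical
  obtain ⟨ζ, hζ⟩ : ∃ ζ : ℂ, IsPrimitiveRoot ζ d := ⟨_, Complex.isPrimitiveRoot_exp d hd.ne'⟩
  have hmap : ∀ (f : ℕ → ℕ),
      Polynomial.map (Int.castRingHom ℂ) (∏ i ∈ Finset.Icc 1 n, (1 - X ^ (f i) : ℤ[X])) =
        ∏ i ∈ Finset.Icc 1 n, (1 - X ^ (f i) : ℂ[X]) := by
    intro f
    rw [Polynomial.map_prod]
    exact Finset.prod_congr rfl fun i _ => by
      simp [Polynomial.map_sub, Polynomial.map_pow]
  have key : ∀ (f : ℕ → ℕ), (∀ i ∈ Finset.Icc 1 n, 0 < f i) →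
      rootMultiplicity ζ (∏ i ∈ Finset.Icc 1 n, (1 - X ^ (f i) : ℂ[X])) =
        ((Finset.Icc 1 n).filter (fun i => d ∣ f i)).card := by
    intro f hf
    rw [rm_prod (fun i hi => binom_ne_zero (hf i hi)) ζ, Finset.card_filter]
    exact Finset.sum_congr rfl fun i hi => rm_binom hd (hf i hi) hζ
  have hPC : (∏ i ∈ Finset.Icc 1 n, (1 - X ^ (a i) : ℂ[X])) ≠ 0 :=
    Finset.prod_ne_zero_iff.mpr fun i hi => binom_ne_zero (ha i hi)
  have hdvdC : (∏ j ∈ Finset.Icc 1 n, (1 - X ^ (b j) : ℂ[X])) ∣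
      ∏ i ∈ Finset.Icc 1 n, (1 - X ^ (a i) : ℂ[X]) := by
    rw [← hmap a, ← hmap b]
    exact Polynomial.map_dvd _ hdvd
  obtain ⟨r, hr⟩ := hdvdC
  have hr0 : r ≠ 0 := by rintro rfl; rw [mul_zero] at hr; exact hPC hr
  have hQ0 : (∏ j ∈ Finset.Icc 1 n, (1 - X ^ (b j) : ℂ[X])) ≠ 0 :=
    Finset.prod_ne_zero_iff.mpr fun i hi => binom_ne_zero (hb i hi)
  have := rootMultiplicity_mul (x := ζ) (hr ▸ hPC)
  rw [← hr] at this
  rw [← key a ha, ← key b hb, this]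
  omega


private lemma foldr_gcd_dvd (c : ℕ) (L : List ℕ) :
    (L.foldr Nat.gcd c ∣ c) ∧ ∀ x ∈ L, L.foldr Nat.gcd c ∣ x := by
  induction L with
  | nil => exact ⟨dvd_rfl, by simp⟩
  | cons e t ih =>
    refine ⟨(Nat.gcd_dvd_right e _).trans ih.1, ?_⟩
    intro x hx
    rcases List.mem_cons.mp hx with rfl | hx
    · exact Nat.gcd_dvd_left _ _
    · exact (Nat.gcd_dvd_right e _).trans (ih.2 x hx)

private lemma foldr_max_le {c M : ℕ} {L : List ℕ} (hc : c ≤ M) (h : ∀ x ∈ L, x ≤ M) :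
    L.foldr max c ≤ M := by
  induction L with
  | nil => exact hc
  | cons e t ih =>
    exact max_le (h e List.mem_cons_self) (ih fun x hx => h x (List.mem_cons_of_mem e hx))

private lemma frob_aux (c : ℕ) (hc : 0 < c) (L : List ℕ) :
    ∀ m : ℤ, (∀ x ∈ L, 0 < x) →
      ((L.foldr Nat.gcd c : ℕ) : ℤ) ∣ m →
      ((L.foldr max c : ℕ) : ℤ) * ((c / L.foldr Nat.gcd c : ℕ) - 1) - c + 1 ≤ m →
      m ∈ AddSubmonoid.closure ((Nat.cast : ℕ → ℤ) '' {x | x ∈ c :: L}) := by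
  induction L with
  | nil =>
    intro m _ hdvd hm
    simp only [List.foldr_nil] at hdvd hm
    rw [Nat.div_self hc] at hm
    push_cast at hm
    obtain ⟨t, rfl⟩ := hdvd
    have hc' : (0:ℤ) < (c:ℤ) := by exact_mod_cast hc
    have ht : 0 ≤ t := by nlinarith
    have : (c:ℤ) * t = t.toNat • (c:ℤ) := by
      rw [nsmul_eq_mul, Int.toNat_of_nonneg ht]; ring
    rw [this]
    exact nsmul_mem (AddSubmonoid.subset_closure (Set.mem_image_of_mem _ (by simp))) _
  | cons e t ih =>
    intro m hpos hdvd hm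
    simp only [List.foldr_cons] at hdvd hm
    set d := t.foldr Nat.gcd c with hd
    set Q' := t.foldr max c with hQ'
    have hdc : d ∣ c := (foldr_gcd_dvd c t).1
    have hdpos : 0 < d := Nat.pos_of_dvd_of_pos hdc hc
    have hepos : 0 < e := hpos e List.mem_cons_self
    set g := Nat.gcd e d with hg
    have hgpos : 0 < g := Nat.gcd_pos_of_pos_left _ hepos
    have hgd : g ∣ d := Nat.gcd_dvd_right e d
    have hge : g ∣ e := Nat.gcd_dvd_left e d
    obtain ⟨d1, hd1⟩ := hgd
    obtain ⟨c1, hc1⟩ := hdc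
    obtain ⟨e1, he1⟩ := hge
    have hd1pos : 0 < d1 := by
      rcases Nat.eq_zero_or_pos d1 with h0 | h; · rw [h0, Nat.mul_zero] at hd1; omega
      exact h
    have hc1pos : 0 < c1 := by
      rcases Nat.eq_zero_or_pos c1 with h0 | h; · rw [h0, Nat.mul_zero] at hc1; omega
      exact h
    have hcdivg : c / g = d1 * c1 := by
      have : c = g * (d1 * c1) := by rw [hc1, hd1]; ring
      rw [this, Nat.mul_div_cancel_left _ hgpos]
    have hcdivd : c / d = c1 := by rw [hc1, Nat.mul_div_cancel_left _ hdpos]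
    -- Bezout
    obtain ⟨mg, hmg⟩ := hdvd
    set A := Nat.gcdA e d with hA
    have hbez : (g:ℤ) = e * A + d * Nat.gcdB e d := Nat.gcd_eq_gcd_ab e d
    set y₀ : ℤ := mg * A with hy₀
    have hdvd0 : (d:ℤ) ∣ m - y₀ * e := by
      refine ⟨mg * Nat.gcdB e d, ?_⟩
      rw [hmg, hy₀, hbez]; ring
    have hd1z : (0:ℤ) < (d1:ℤ) := by exact_mod_cast hd1pos
    set y : ℤ := y₀ % (d1:ℤ) with hy
    have hy0 : 0 ≤ y := Int.emod_nonneg _ (by exact_mod_cast hd1pos.ne')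
    have hylt : y < (d1:ℤ) := Int.emod_lt_of_pos _ hd1z
    have hde : (d1:ℤ) * e = d * e1 := by
      have : (d1:ℕ) * e = d * e1 := by rw [he1, hd1]; ring
      exact_mod_cast this
    have hdvd1 : (d:ℤ) ∣ m - y * e := by
      have h1 : y₀ - y = (d1:ℤ) * (y₀ / (d1:ℤ)) := by
        rw [hy]; rw [Int.emod_def]; ring
      have h2 : (d:ℤ) ∣ (y₀ - y) * e :=
        ⟨y₀ / (d1:ℤ) * e1, by rw [h1]; linear_combination (y₀ / (d1:ℤ)) * hde⟩
      have : m - y * e = (m - y₀ * e) + (y₀ - y) * e := by ring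
      rw [this]
      exact dvd_add hdvd0 h2
    set m' : ℤ := m - y * e with hm'
    have hez : (0:ℤ) ≤ (e:ℤ) := by positivity
    have hbound : (Q' : ℤ) * ((c / d : ℕ) - 1) - c + 1 ≤ m' := by
      rw [hcdivd]
      rw [hcdivg] at hm
      have hQe : (e:ℤ) ≤ (max e Q' : ℕ) := by exact_mod_cast le_max_left e Q'
      have hQQ' : (Q':ℤ) ≤ (max e Q' : ℕ) := by exact_mod_cast le_max_right e Q'
      have hc1z : (1:ℤ) ≤ (c1:ℤ) := by exact_mod_cast hc1pos
      have hd1z' : (1:ℤ) ≤ (d1:ℤ) := by exact_mod_cast hd1pos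
      have hQz : (0:ℤ) ≤ (max e Q' : ℕ) := by positivity
      have hye : y * e ≤ ((d1:ℤ) - 1) * e := by
        apply mul_le_mul_of_nonneg_right _ hez
        omega
      have hcast : ((d1 * c1 : ℕ) : ℤ) = (d1:ℤ) * c1 := by push_cast; ring
      rw [hcast] at hm
      have key : ((max e Q' : ℕ) : ℤ) * ((d1:ℤ) * c1 - 1) - ((d1:ℤ) - 1) * e
          ≥ (Q':ℤ) * ((c1:ℤ) - 1) := by
        nlinarith [mul_nonneg (sub_nonneg.mpr hQQ') (sub_nonneg.mpr hc1z),
          mul_nonneg (sub_nonneg.mpr hQe) (sub_nonneg.mpr hd1z'),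
          mul_nonneg (mul_nonneg hQz (sub_nonneg.mpr hc1z)) (sub_nonneg.mpr hd1z')]
      linarith
    have hmem' := ih m' (fun x hx => hpos x (List.mem_cons_of_mem e hx)) hdvd1 hbound
    have hsub : ((Nat.cast : ℕ → ℤ) '' {x | x ∈ c :: t}) ⊆
        ((Nat.cast : ℕ → ℤ) '' {x | x ∈ c :: e :: t}) := by
      apply Set.image_mono
      intro x hx
      rcases List.mem_cons.mp hx with rfl | hx
      · exact List.mem_cons_self
      · exact List.mem_cons_of_mem _ (List.mem_cons_of_mem _ hx)
    have hmem : m' ∈ AddSubmonoid.closure ((Nat.cast : ℕ → ℤ) '' {x | x ∈ c :: e :: t}) :=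
      AddSubmonoid.closure_mono hsub hmem'
    have hemem : (e:ℤ) ∈ AddSubmonoid.closure ((Nat.cast : ℕ → ℤ) '' {x | x ∈ c :: e :: t}) :=
      AddSubmonoid.subset_closure (Set.mem_image_of_mem _ (by simp))
    have : m = m' + y.toNat • (e:ℤ) := by
      rw [nsmul_eq_mul, Int.toNat_of_nonneg hy0, hm']; ring
    rw [this]
    exact AddSubmonoid.add_mem _ hmem (nsmul_mem hemem _)

private lemma mono_aux {n : ℕ} {b : ℕ → ℕ} (h : ∀ i, 1 ≤ i → i < n → b i ≤ b (i + 1)) :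
    ∀ j k, 1 ≤ j → j ≤ k → k ≤ n → b j ≤ b k := by
  intro j k h1 hjk
  induction k, hjk using Nat.le_induction with
  | base => intro _; exact le_refl _
  | succ k hk ih => intro hk1; exact (ih (by omega)).trans (h k (by omega) (by omega))

private lemma mem_closure_of_int {S : Set ℕ} {m : ℕ}
    (h : (m : ℤ) ∈ AddSubmonoid.closure ((Nat.cast : ℕ → ℤ) '' S)) :
    m ∈ AddSubmonoid.closure S := by
  have h2 : (m : ℤ) ∈ (AddSubmonoid.closure S).map (Nat.castAddMonoidHom ℤ) := by
    rw [AddMonoidHom.map_mclosure]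
    exact h
  obtain ⟨x, hx, hxm⟩ := h2
  have hxm' : (x : ℤ) = (m : ℤ) := hxm
  have : x = m := by exact_mod_cast hxm'
  exact this ▸ hx

/-- **Theorem 3.8 (main theorem), combinatorial conclusion.**
Let `n ≥ 2` and `a_1 ≤ … ≤ a_n`, `b_1 ≤ … ≤ b_n` be positive integers such that
`∏ (1 - q^{b_j})` divides `∏ (1 - q^{a_i})` in `ℤ[q]` and
`2 b_n ⌊b_{n-1}/2⌋ - b_1 < a_1`. Then for every `I ⊆ {1,…,n}`, the number of indices `i`
with `a_i` in the numerical semigroup generated by `{b_j : j ∈ I}` is at least `#I`. -/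
theorem stmt_0 (n : ℕ) (hn : 2 ≤ n) (a b : ℕ → ℕ)
    (ha_pos : ∀ i ∈ Finset.Icc 1 n, 0 < a i)
    (hb_pos : ∀ i ∈ Finset.Icc 1 n, 0 < b i)
    (ha_mono : ∀ i, 1 ≤ i → i < n → a i ≤ a (i + 1))
    (hb_mono : ∀ i, 1 ≤ i → i < n → b i ≤ b (i + 1))
    (hdvd : (∏ j ∈ Finset.Icc 1 n, (1 - X ^ (b j)) : ℤ[X]) ∣
      ∏ i ∈ Finset.Icc 1 n, (1 - X ^ (a i)))
    (hfrob : ((2 * b n * (b (n - 1) / 2) : ℕ) : ℤ) - (b 1 : ℤ) < (a 1 : ℤ)) :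
    ∀ I ⊆ Finset.Icc 1 n,
      I.card ≤ ((Finset.Icc 1 n).filter
        (fun i => a i ∈ AddSubmonoid.closure ((I.image b : Finset ℕ) : Set ℕ))).card := by
  intro I hI
  rcases I.eq_empty_or_nonempty with rfl | hne
  · simp
  have hbm : ∀ j k, 1 ≤ j → j ≤ k → k ≤ n → b j ≤ b k := mono_aux hb_mono
  have ham : ∀ j k, 1 ≤ j → j ≤ k → k ≤ n → a j ≤ a k := mono_aux ha_mono
  set j0 := I.min' hne with hj0
  have hj0I : j0 ∈ I := I.min'_mem hne
  have hj0Icc : 1 ≤ j0 ∧ j0 ≤ n := by have := hI hj0I; rwa [Finset.mem_Icc] at this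
  set c := b j0 with hcdef
  have hc : 0 < c := hb_pos j0 (hI hj0I)
  set L := (I.erase j0).toList.map b with hL
  have hLmem : ∀ x ∈ L, ∃ j, (j ∈ I ∧ j ≠ j0) ∧ x = b j := by
    intro x hx
    rw [hL, List.mem_map] at hx
    obtain ⟨j, hj, rfl⟩ := hx
    rw [Finset.mem_toList, Finset.mem_erase] at hj
    exact ⟨j, ⟨hj.2, hj.1⟩, rfl⟩
  have hLpos : ∀ x ∈ L, 0 < x := by
    intro x hx; obtain ⟨j, hj, rfl⟩ := hLmem x hx; exact hb_pos j (hI hj.1)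
  set g := L.foldr Nat.gcd c with hg
  have hgdvd := foldr_gcd_dvd c L
  have hgpos : 0 < g := Nat.pos_of_dvd_of_pos hgdvd.1 hc
  have hmemL : ∀ j ∈ I, j ≠ j0 → b j ∈ L := by
    intro j hj hjj
    rw [hL, List.mem_map]
    exact ⟨j, by rw [Finset.mem_toList, Finset.mem_erase]; exact ⟨hjj, hj⟩, rfl⟩
  have hgb : ∀ j ∈ I, g ∣ b j := by
    intro j hj
    by_cases hjj : j = j0
    · rw [hjj]; exact hgdvd.1
    · exact hgdvd.2 (b j) (hmemL j hj hjj)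
  have hset : {x : ℕ | x ∈ c :: L} = ((I.image b : Finset ℕ) : Set ℕ) := by
    ext x
    simp only [Set.mem_setOf_eq, List.mem_cons, Finset.coe_image, Set.mem_image,
      Finset.mem_coe]
    constructor
    · rintro (rfl | hx)
      · exact ⟨j0, hj0I, rfl⟩
      · obtain ⟨j, hj, rfl⟩ := hLmem x hx; exact ⟨j, hj.1, rfl⟩
    · rintro ⟨j, hj, rfl⟩
      by_cases hjj : j = j0
      · left; rw [hjj]
      · right; exact hmemL j hj hjj
  have hQ : L.foldr max c ≤ b n := by
    refine foldr_max_le (hbm j0 n hj0Icc.1 hj0Icc.2 le_rfl) ?_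
    intro x hx
    obtain ⟨j, hj, rfl⟩ := hLmem x hx
    have := hI hj.1; rw [Finset.mem_Icc] at this
    exact hbm j n this.1 this.2 le_rfl
  have hbound : ∀ i ∈ Finset.Icc 1 n,
      ((L.foldr max c : ℕ) : ℤ) * (((c / g : ℕ) : ℤ) - 1) - c + 1 ≤ (a i : ℤ) := by
    intro i hi
    rw [Finset.mem_Icc] at hi
    have hai : 0 < a i := ha_pos i (by rw [Finset.mem_Icc]; exact hi)
    rcases eq_or_ne L [] with hLnil | hLne
    · -- singleton case: g = c, c / g = 1
      have hgc : g = c := by rw [hg, hLnil]; rfl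
      have : (c / g : ℕ) = 1 := by rw [hgc, Nat.div_self hc]
      rw [this]
      push_cast
      simp only [sub_self, mul_zero]
      have h1 : (1:ℤ) ≤ (a i : ℤ) := by exact_mod_cast hai
      have h2 : (1:ℤ) ≤ (c : ℤ) := by exact_mod_cast hc
      linarith
    · -- |I| ≥ 2 case
      obtain ⟨x0, hx0⟩ := List.exists_mem_of_ne_nil L hLne
      obtain ⟨j1, hj1, rfl⟩ := hLmem x0 hx0
      have hj1Icc : 1 ≤ j1 ∧ j1 ≤ n := by
        have := hI hj1.1; rwa [Finset.mem_Icc] at this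
      have hj0lt : j0 < j1 := lt_of_le_of_ne (I.min'_le j1 hj1.1) (Ne.symm hj1.2)
      have hj0n1 : j0 ≤ n - 1 := by omega
      have hcP : c ≤ b (n - 1) := hbm j0 (n - 1) hj0Icc.1 hj0n1 (by omega)
      have hb1c : b 1 ≤ c := hbm 1 j0 le_rfl hj0Icc.1 hj0Icc.2
      have h1le : 1 ≤ c / g := (Nat.one_le_div_iff hgpos).mpr (Nat.le_of_dvd hc hgdvd.1)
      have hstep : c / g - 1 ≤ 2 * (b (n - 1) / 2) := by
        rcases eq_or_ne g 1 with hg1 | hg1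
        · rw [hg1, Nat.div_one]
          have := Nat.div_add_mod (b (n - 1)) 2
          have := Nat.mod_lt (b (n - 1)) (show 0 < 2 by omega)
          omega
        · have hg2 : 2 ≤ g := by omega
          have h1 : c / g ≤ c / 2 := Nat.div_le_div_left hg2 (by omega)
          have h2 : c / 2 ≤ b (n - 1) / 2 := Nat.div_le_div_right hcP
          omega
      have hstep' : ((c / g : ℕ) : ℤ) - 1 ≤ 2 * ((b (n - 1) / 2 : ℕ) : ℤ) := by
        have : ((c / g - 1 : ℕ) : ℤ) ≤ ((2 * (b (n - 1) / 2) : ℕ) : ℤ) := by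
          exact_mod_cast hstep
        push_cast at this
        omega
      have hQz : ((L.foldr max c : ℕ) : ℤ) ≤ (b n : ℤ) := by exact_mod_cast hQ
      have hmul : ((L.foldr max c : ℕ) : ℤ) * (((c / g : ℕ) : ℤ) - 1) ≤
          (b n : ℤ) * (2 * ((b (n - 1) / 2 : ℕ) : ℤ)) := by
        apply mul_le_mul hQz hstep'
        · have : (1:ℤ) ≤ ((c / g : ℕ) : ℤ) := by exact_mod_cast h1le
          linarith
        · positivity
      have hfrob' : ((2 * b n : ℕ) : ℤ) * ((b (n - 1) / 2 : ℕ) : ℤ) - (b 1 : ℤ) < (a 1 : ℤ) := by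
        rw [← Nat.cast_mul]; exact hfrob
      have h2n : ((2 * b n : ℕ) : ℤ) = 2 * (b n : ℤ) := by push_cast; ring
      rw [h2n] at hfrob'
      have ha1i : (a 1 : ℤ) ≤ (a i : ℤ) := by
        exact_mod_cast ham 1 i le_rfl hi.1 hi.2
      have hb1cz : (b 1 : ℤ) ≤ (c : ℤ) := by exact_mod_cast hb1c
      linarith
  refine le_trans ?_ (le_trans (count_lemma n a b ha_pos hb_pos hdvd g hgpos) ?_)
  · apply Finset.card_le_card
    intro j hj
    rw [Finset.mem_filter]
    exact ⟨hI hj, hgb j hj⟩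
  · apply Finset.card_le_card
    intro i hi
    rw [Finset.mem_filter] at hi ⊢
    refine ⟨hi.1, ?_⟩
    have hmem := frob_aux c hc L (a i) hLpos
      (Int.natCast_dvd_natCast.mpr hi.2) (hbound i hi.1)
    rw [hset] at hmem
    exact mem_closure_of_int hmem
end

section
/- Let a_1,…,a_n and b_1,…,b_n be positive integers, and consider the polynomial ring ℂ[x_1,…,x_n] graded by assigning deg(x_i) = b_i. If there exists a regular sequence f_1,…,f_n in ℂ[x_1,…,x_n] consisting of nonzero weighted-homogeneous polynomials with deg(f_i) = a_i, then for every subset I ⊆ {1,…,n}, the number of indices i ∈ {1,…,n} (counted with multiplicity) such that a_i ∈ ⟨{b_j : j ∈ I}⟩ is at least #I. -/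
open scoped Classical

open MvPolynomial Module DirectSum
set_option maxHeartbeats 1000000
set_option synthInstance.maxHeartbeats 400000

namespace Stmt2Aux




/-- All exponent vectors with every entry `≤ X`. -/
noncomputable def expFinset (n X : ℕ) : Finset (Fin n →₀ ℕ) :=
  (Finset.univ : Finset (Fin n → Fin (X + 1))).image
    (fun g => Finsupp.equivFunOnFinite.symm (fun j => (g j : ℕ)))

lemma card_expFinset (n X : ℕ) : (expFinset n X).card ≤ (X + 1) ^ n := by
  classical
  calc (expFinset n X).card ≤ (Finset.univ : Finset (Fin n → Fin (X + 1))).card :=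
        Finset.card_image_le
  _ = (X + 1) ^ n := by simp [Fintype.card_fun]

lemma mem_expFinset {n : ℕ} {b : Fin n → ℕ} (hb : ∀ j, 0 < b j) {α : Fin n →₀ ℕ} {X : ℕ}
    (hα : Finsupp.weight b α ≤ X) : α ∈ expFinset n X := by
  classical
  have hbound : ∀ j, α j ≤ X := by
    intro j
    by_cases hj : α j = 0
    · omega
    · have hjs : j ∈ α.support := Finsupp.mem_support_iff.mpr hj
      have h1 : α j * b j ≤ Finsupp.weight b α := by
        rw [Finsupp.weight_apply, Finsupp.sum]
        have := Finset.single_le_sum (f := fun i => α i • b i)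
          (fun i _ => Nat.zero_le _) hjs
        simpa [smul_eq_mul] using this
      have h2 : α j ≤ α j * b j := Nat.le_mul_of_pos_right _ (hb j)
      omega
  refine Finset.mem_image.mpr ⟨fun j => ⟨α j, by have := hbound j; omega⟩, Finset.mem_univ _, ?_⟩
  ext j
  simp [Finsupp.equivFunOnFinite]

lemma mem_span_monomials {n : ℕ} {b : Fin n → ℕ} {d : ℕ} {p : MvPolynomial (Fin n) ℂ}
    (hp : p ∈ weightedHomogeneousSubmodule ℂ b d) (S : Finset (Fin n →₀ ℕ))
    (hS : ∀ α : Fin n →₀ ℕ, Finsupp.weight b α = d → α ∈ S) :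
    p ∈ Submodule.span ℂ ((fun α => (monomial α (1 : ℂ))) '' S) := by
  classical
  rw [← support_sum_monomial_coeff p]
  refine Submodule.sum_mem _ (fun α hα => ?_)
  have hw : Finsupp.weight b α = d := by
    exact (mem_weightedHomogeneousSubmodule ℂ b d p).mp hp (mem_support_iff.mp hα)
  have : (monomial α) (coeff α p) = (coeff α p) • (monomial α (1 : ℂ)) := by
    simp [smul_monomial]
  rw [this]
  exact Submodule.smul_mem _ _ (Submodule.subset_span ⟨α, hS α hw, rfl⟩)

lemma fd_W {n : ℕ} (b : Fin n → ℕ) (hb : ∀ j, 0 < b j) (d : ℕ) :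
    FiniteDimensional ℂ (weightedHomogeneousSubmodule ℂ b d) := by
  classical
  have h : weightedHomogeneousSubmodule ℂ b d ≤
      Submodule.span ℂ ((fun α => (monomial α (1 : ℂ))) '' (expFinset n d)) := by
    intro p hp
    exact mem_span_monomials hp (expFinset n d) (fun α hα => mem_expFinset hb (le_of_eq hα))
  haveI : FiniteDimensional ℂ
      (Submodule.span ℂ ((fun α => (monomial α (1 : ℂ))) ''
        ((expFinset n d : Finset (Fin n →₀ ℕ)) : Set (Fin n →₀ ℕ)))) :=
    FiniteDimensional.span_of_finite ℂ (Set.Finite.image _ (Finset.finite_toSet _))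
  exact Submodule.finiteDimensional_of_le h


variable {n : ℕ} (b : Fin n → ℕ)

noncomputable local instance gradeInst : GradedAlgebra (weightedHomogeneousSubmodule ℂ b) :=
  weightedGradedAlgebra ℂ b

-- notation
local notation "W" => weightedHomogeneousSubmodule ℂ b
local notation "R'" => MvPolynomial (Fin n) ℂ


lemma decompose_coe_add {p q : MvPolynomial (Fin n) ℂ} (d : ℕ) :
    (DirectSum.decompose (weightedHomogeneousSubmodule ℂ b) (p + q) d :
        MvPolynomial (Fin n) ℂ) =
      (DirectSum.decompose (weightedHomogeneousSubmodule ℂ b) p d : MvPolynomial (Fin n) ℂ) +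
      (DirectSum.decompose (weightedHomogeneousSubmodule ℂ b) q d : MvPolynomial (Fin n) ℂ) := by
  have h := map_add (DirectSum.decomposeAddEquiv (weightedHomogeneousSubmodule ℂ b)) p q
  simp only [DirectSum.decomposeAddEquiv_apply] at h
  rw [h, DirectSum.add_apply, Submodule.coe_add]

lemma step_lt {J K : Ideal (MvPolynomial (Fin n) ℂ)} {g : MvPolynomial (Fin n) ℂ} {ag d : ℕ}
    (hg : g ∈ W ag) (hK : K = J ⊔ Ideal.span {g})
    (hJhom : Ideal.IsHomogeneous (weightedHomogeneousSubmodule ℂ b) J)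
    (hd : d < ag) :
    K.restrictScalars ℂ ⊓ W d = J.restrictScalars ℂ ⊓ W d := by
  refine le_antisymm ?_ (by
    refine inf_le_inf_right _ ?_
    intro x hx
    exact hK ▸ Ideal.mem_sup_left hx)
  rintro u ⟨huK, huW⟩
  refine ⟨?_, huW⟩
  obtain ⟨p, hp, z, hz, hpz⟩ := Submodule.mem_sup.mp (hK ▸ huK)
  obtain ⟨r, hr⟩ := Ideal.mem_span_singleton'.mp hz
  have hu : u = (DirectSum.decompose (weightedHomogeneousSubmodule ℂ b) u d : R') :=
    (DirectSum.decompose_of_mem_same _ huW).symm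
  have hdec : (DirectSum.decompose (weightedHomogeneousSubmodule ℂ b) u d : R') =
      (DirectSum.decompose (weightedHomogeneousSubmodule ℂ b) p d : R') +
      (DirectSum.decompose (weightedHomogeneousSubmodule ℂ b) (r * g) d : R') := by
    rw [← hr] at hpz
    rw [← hpz, decompose_coe_add]
  have hzero : (DirectSum.decompose (weightedHomogeneousSubmodule ℂ b) (r * g) d : R') = 0 :=
    DirectSum.coe_decompose_mul_of_right_mem_of_not_le _ hg (by omega)
  have : u = (DirectSum.decompose (weightedHomogeneousSubmodule ℂ b) p d : R') := by
    rw [hu, hdec, hzero, add_zero]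
  rw [this]
  exact hJhom d hp

lemma step_eq (hb : ∀ j, 0 < b j)
    {J K : Ideal (MvPolynomial (Fin n) ℂ)} {g : MvPolynomial (Fin n) ℂ} {ag d : ℕ}
    (hg : g ∈ W ag) (hK : K = J ⊔ Ideal.span {g})
    (hreg : ∀ w, g * w ∈ J → w ∈ J)
    (hJhom : Ideal.IsHomogeneous (weightedHomogeneousSubmodule ℂ b) J)
    (had : ag ≤ d) :
    finrank ℂ (W (d - ag)) + finrank ℂ ↥(J.restrictScalars ℂ ⊓ W d)
      = finrank ℂ ↥(K.restrictScalars ℂ ⊓ W d)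
        + finrank ℂ ↥(J.restrictScalars ℂ ⊓ W (d - ag)) := by
  classical
  haveI := fd_W b hb d
  haveI := fd_W b hb (d - ag)
  haveI : FiniteDimensional ℂ ↥(J.restrictScalars ℂ ⊓ W d) :=
    Submodule.finiteDimensional_of_le inf_le_right
  haveI : FiniteDimensional ℂ ↥(K.restrictScalars ℂ ⊓ W d) :=
    Submodule.finiteDimensional_of_le inf_le_right
  haveI : FiniteDimensional ℂ ↥(J.restrictScalars ℂ ⊓ W (d - ag)) :=
    Submodule.finiteDimensional_of_le inf_le_right
  -- the multiplication map
  have hmem : ∀ (w : W (d - ag)) (q : ↥(J.restrictScalars ℂ ⊓ W d)),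
      g * (w : R') + (q : R') ∈ K.restrictScalars ℂ ⊓ W d := by
    rintro ⟨w, hw⟩ ⟨q, hqJ, hqW⟩
    constructor
    · refine Submodule.add_mem _ ?_ (hK ▸ Ideal.mem_sup_left hqJ)
      refine hK ▸ Ideal.mem_sup_right ?_
      exact Ideal.mem_span_singleton'.mpr ⟨w, mul_comm w g⟩
    · refine Submodule.add_mem _ ?_ hqW
      have := SetLike.mul_mem_graded hg hw
      rwa [Nat.add_sub_cancel' had] at this
  let Ψ : (W (d - ag) × ↥(J.restrictScalars ℂ ⊓ W d)) →ₗ[ℂ]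
      ↥(K.restrictScalars ℂ ⊓ W d) :=
    { toFun := fun p => ⟨g * (p.1 : R') + (p.2 : R'), hmem p.1 p.2⟩
      map_add' := by
        rintro ⟨w1, q1⟩ ⟨w2, q2⟩
        apply Subtype.ext
        show g * ((w1 : MvPolynomial (Fin n) ℂ) + (w2 : MvPolynomial (Fin n) ℂ))
            + ((q1 : MvPolynomial (Fin n) ℂ) + (q2 : MvPolynomial (Fin n) ℂ))
          = (g * (w1 : MvPolynomial (Fin n) ℂ) + (q1 : MvPolynomial (Fin n) ℂ))
            + (g * (w2 : MvPolynomial (Fin n) ℂ) + (q2 : MvPolynomial (Fin n) ℂ))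
        ring
      map_smul' := by
        rintro c ⟨w, q⟩
        apply Subtype.ext
        show g * (c • (w : MvPolynomial (Fin n) ℂ)) + (c • (q : MvPolynomial (Fin n) ℂ))
          = c • (g * (w : MvPolynomial (Fin n) ℂ) + (q : MvPolynomial (Fin n) ℂ))
        rw [mul_smul_comm, smul_add] }
  have hsurj : Function.Surjective Ψ := by
    rintro ⟨u, huK, huW⟩
    obtain ⟨p, hp, z, hz, hpz⟩ := Submodule.mem_sup.mp (hK ▸ huK)
    obtain ⟨r, hr⟩ := Ideal.mem_span_singleton'.mp hz
    have hu : u = (DirectSum.decompose (weightedHomogeneousSubmodule ℂ b) u d : R') :=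
      (DirectSum.decompose_of_mem_same _ huW).symm
    have hdec : (DirectSum.decompose (weightedHomogeneousSubmodule ℂ b) u d : R') =
        (DirectSum.decompose (weightedHomogeneousSubmodule ℂ b) p d : R') +
        (DirectSum.decompose (weightedHomogeneousSubmodule ℂ b) (r * g) d : R') := by
      rw [← hr] at hpz; rw [← hpz, decompose_coe_add]
    have hmul : (DirectSum.decompose (weightedHomogeneousSubmodule ℂ b) (r * g) d : R') =
        (DirectSum.decompose (weightedHomogeneousSubmodule ℂ b) r (d - ag) : R') * g :=
      DirectSum.coe_decompose_mul_of_right_mem_of_le _ hg had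
    refine ⟨⟨⟨(DirectSum.decompose (weightedHomogeneousSubmodule ℂ b) r (d - ag) : R'),
        Submodule.coe_mem _⟩,
      ⟨(DirectSum.decompose (weightedHomogeneousSubmodule ℂ b) p d : R'),
        hJhom d hp, Submodule.coe_mem _⟩⟩, ?_⟩
    apply Subtype.ext
    show g * _ + _ = u
    rw [mul_comm, ← hmul, hu, hdec]
    ring
  -- kernel ≃ J ⊓ W (d - ag)
  have hkerJ : ∀ x : LinearMap.ker Ψ, ((x : (W (d - ag) × ↥(J.restrictScalars ℂ ⊓ W d))).1 : R')
      ∈ J.restrictScalars ℂ ⊓ W (d - ag) := by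
    rintro ⟨⟨w, q⟩, hx⟩
    have h0 : g * (w : R') + (q : R') = 0 := congrArg Subtype.val hx
    have hgw : g * (w : R') ∈ J := by
      have : g * (w : R') = -(q : R') := by linear_combination h0
      rw [this]
      exact Submodule.neg_mem _ q.2.1
    exact ⟨hreg _ hgw, w.2⟩
  let e : LinearMap.ker Ψ ≃ₗ[ℂ] ↥(J.restrictScalars ℂ ⊓ W (d - ag)) :=
    { toFun := fun x => ⟨_, hkerJ x⟩
      map_add' := by rintro ⟨⟨w1, q1⟩, h1⟩ ⟨⟨w2, q2⟩, h2⟩; rfl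
      map_smul' := by rintro c ⟨⟨w, q⟩, h⟩; rfl
      invFun := fun w => ⟨⟨⟨(w : R'), w.2.2⟩, ⟨-(g * (w : R')),
          Submodule.neg_mem _ (Ideal.mul_mem_left J g w.2.1),
          Submodule.neg_mem _ (by
            have := SetLike.mul_mem_graded hg w.2.2
            rwa [Nat.add_sub_cancel' had] at this)⟩⟩, by
        apply Subtype.ext
        show g * (w : R') + -(g * (w : R')) = 0
        ring⟩
      left_inv := by
        rintro ⟨⟨w, q⟩, hx⟩
        have h0 : g * (w : R') + (q : R') = 0 := congrArg Subtype.val hx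
        apply Subtype.ext
        apply Prod.ext
        · rfl
        · apply Subtype.ext
          show -(g * (w : R')) = (q : R')
          linear_combination -h0
      right_inv := by rintro ⟨w, hw⟩; rfl }
  have hrn := LinearMap.finrank_range_add_finrank_ker Ψ
  rw [Module.finrank_prod] at hrn
  have hr : finrank ℂ ↥(LinearMap.range Ψ) = finrank ℂ ↥(K.restrictScalars ℂ ⊓ W d) := by
    rw [LinearMap.range_eq_top.mpr hsurj]
    exact finrank_top ℂ _
  have hk : finrank ℂ ↥(LinearMap.ker Ψ) =
      finrank ℂ ↥(J.restrictScalars ℂ ⊓ W (d - ag)) := e.finrank_eq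
  omega



lemma partB_mult (N : ℕ) (aa : ℕ → ℕ) (c : ℕ → ℕ → ℕ)
    (hmono : ∀ k : ℕ, ∀ {X Y : ℕ}, X ≤ Y → c k X ≤ c k Y)
    (hrec : ∀ k, k < N → ∀ X, c k X = c (k+1) X + (if aa k ≤ X then c k (X - aa k) else 0))
    {k : ℕ} (hk : k < N) (D : ℕ) : ∀ L : ℕ, (L+1) * c (k+1) D ≤ c k (D + L * aa k) := by
  intro L
  induction L with
  | zero =>
      simp only [zero_mul, add_zero, one_mul]
      have := hrec k hk D
      omega
  | succ L ih =>
      have hX := hrec k hk (D + (L+1) * aa k)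
      have hif : (if aa k ≤ D + (L+1) * aa k then c k (D + (L+1) * aa k - aa k) else 0)
          = c k (D + L * aa k) := by
        rw [if_pos (by nlinarith)]
        congr 1
        ring_nf
        omega
      rw [hif] at hX
      have hm : c (k+1) D ≤ c (k+1) (D + (L+1) * aa k) := hmono _ (by omega)
      nlinarith

lemma partB_iter (N : ℕ) (aa : ℕ → ℕ) (c : ℕ → ℕ → ℕ)
    (hmono : ∀ k : ℕ, ∀ {X Y : ℕ}, X ≤ Y → c k X ≤ c k Y)
    (hrec : ∀ k, k < N → ∀ X, c k X = c (k+1) X + (if aa k ≤ X then c k (X - aa k) else 0))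
    (L : ℕ) : ∀ k, k ≤ N → ∀ D, (L+1)^k * c k D ≤ c 0 (D + L * (∑ i ∈ Finset.range k, aa i)) := by
  intro k
  induction k with
  | zero => intro _ D; simpa using hmono 0 (Nat.le_add_right _ _)
  | succ k ih =>
      intro hk D
      have h1 : (L+1) * c (k+1) D ≤ c k (D + L * aa k) :=
        partB_mult N aa c hmono hrec (by omega) D L
      have h2 : (L+1)^k * ((L+1) * c (k+1) D) ≤ (L+1)^k * c k (D + L * aa k) :=
        Nat.mul_le_mul_left _ h1
      have h3 := ih (by omega) (D + L * aa k)
      calc (L+1)^(k+1) * c (k+1) D = (L+1)^k * ((L+1) * c (k+1) D) := by ring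
      _ ≤ (L+1)^k * c k (D + L * aa k) := h2
      _ ≤ c 0 (D + L * aa k + L * (∑ i ∈ Finset.range k, aa i)) := h3
      _ = c 0 (D + L * (∑ i ∈ Finset.range (k+1), aa i)) := by
            rw [Finset.sum_range_succ]; ring_nf
      _ ≤ c 0 (D + L * (∑ i ∈ Finset.range (k+1), aa i)) := le_rfl

lemma partB (N : ℕ) (aa : ℕ → ℕ) (c : ℕ → ℕ → ℕ)
    (hmono : ∀ k : ℕ, ∀ {X Y : ℕ}, X ≤ Y → c k X ≤ c k Y)
    (hrec : ∀ k, k < N → ∀ X, c k X = c (k+1) X + (if aa k ≤ X then c k (X - aa k) else 0))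
    (hc0 : ∀ X, c 0 X ≤ (X+1)^N) (D : ℕ) :
    c N D ≤ ((∑ i ∈ Finset.range N, aa i) + 1)^N := by
  set A := ∑ i ∈ Finset.range N, aa i with hA
  have h1 : (D+2)^N * c N D ≤ c 0 (D + (D+1) * A) :=
    partB_iter N aa c hmono hrec (D+1) N le_rfl D
  have h2 : c 0 (D + (D+1) * A) ≤ (D + (D+1) * A + 1)^N := hc0 _
  have h3 : (D + (D+1) * A + 1)^N ≤ ((D+2) * (A+1))^N := by
    apply Nat.pow_le_pow_left
    nlinarith
  have h4 : ((D+2) * (A+1))^N = (D+2)^N * (A+1)^N := by rw [mul_pow]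
  have hpos : 0 < (D+2)^N := pow_pos (by omega) _
  have : (D+2)^N * c N D ≤ (D+2)^N * (A+1)^N := by omega
  exact Nat.le_of_mul_le_mul_left this hpos



/-- The generating set in each degree. -/
def genSet {ι : Type} [Fintype ι] (g : ι → MvPolynomial (Fin n) ℂ) (cdeg : ι → ℕ)
    (Dstar d : ℕ) : Set (MvPolynomial (Fin n) ℂ) :=
  {x | ∃ (β : ι → ℕ) (α : Fin n →₀ ℕ),
    (∑ i, β i * cdeg i) + Finsupp.weight b α = d ∧ Finsupp.weight b α ≤ Dstar ∧
    x = (∏ i, g i ^ β i) * monomial α 1}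

lemma partC {ι : Type} [Fintype ι] (g : ι → MvPolynomial (Fin n) ℂ)
    (cdeg : ι → ℕ) (hg : ∀ i, g i ∈ W (cdeg i)) (hc : ∀ i, 0 < cdeg i) (Dstar : ℕ)
    (hhigh : ∀ d : ℕ, Dstar < d → (W d) ≤ (Ideal.span (Set.range g)).restrictScalars ℂ) :
    ∀ d : ℕ, (W d) ≤ Submodule.span ℂ (genSet b g cdeg Dstar d) := by
  intro d
  induction d using Nat.strong_induction_on with
  | _ d IH =>
    intro p hp
    rcases le_or_gt d Dstar with hd | hd
    · -- low degree: spanned by monomials directly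
      rw [← support_sum_monomial_coeff p]
      refine Submodule.sum_mem _ (fun α hα => ?_)
      have hw : Finsupp.weight b α = d :=
        (mem_weightedHomogeneousSubmodule ℂ b d p).mp hp (mem_support_iff.mp hα)
      have heq : (monomial α) (coeff α p) = (coeff α p) • ((∏ i, g i ^ (0:ℕ)) * monomial α 1) := by
        simp [smul_monomial]
      rw [heq]
      refine Submodule.smul_mem _ _ (Submodule.subset_span ?_)
      exact ⟨fun _ => 0, α, by simp [hw], by rw [hw]; exact hd, rfl⟩
    · -- high degree
      have hpJ : p ∈ Ideal.span (Set.range g) := hhigh d hd hp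
      obtain ⟨r, hr⟩ := (Finsupp.mem_span_range_iff_exists_finsupp).mp hpJ
      -- p = ∑ i, r i • g i  with r : ι →₀ R'
      have hps : p = ∑ i, (r i) * g i := by
        rw [← hr]
        rw [Finsupp.sum_fintype]
        · rfl
        · intro i; exact zero_smul _ _
      have hdecp : p = (DirectSum.decompose (weightedHomogeneousSubmodule ℂ b) p d : R') :=
        (DirectSum.decompose_of_mem_same _ hp).symm
      have hdecsum : (DirectSum.decompose (weightedHomogeneousSubmodule ℂ b) p d : R') =
          ∑ i, (DirectSum.decompose (weightedHomogeneousSubmodule ℂ b) ((r i) * g i) d : R') := by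
        conv_lhs => rw [hps]
        have h := map_sum (DirectSum.decomposeAddEquiv (weightedHomogeneousSubmodule ℂ b))
          (fun i => (r i) * g i) Finset.univ
        simp only [DirectSum.decomposeAddEquiv_apply] at h
        rw [h, DFinsupp.finset_sum_apply, AddSubmonoidClass.coe_finset_sum]
      rw [hdecp, hdecsum]
      refine Submodule.sum_mem _ (fun i _ => ?_)
      rcases le_or_gt (cdeg i) d with hci | hci
      · have hmul : (DirectSum.decompose (weightedHomogeneousSubmodule ℂ b) ((r i) * g i) d : R')
            = (DirectSum.decompose (weightedHomogeneousSubmodule ℂ b) (r i) (d - cdeg i) : R')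
              * g i :=
          DirectSum.coe_decompose_mul_of_right_mem_of_le _ (hg i) hci
        rw [hmul]
        set s := (DirectSum.decompose (weightedHomogeneousSubmodule ℂ b) (r i) (d - cdeg i) : R')
          with hs
        have hsW : s ∈ W (d - cdeg i) := Submodule.coe_mem _
        have hlt : d - cdeg i < d := by have := hc i; omega
        have hsp : s ∈ Submodule.span ℂ (genSet b g cdeg Dstar (d - cdeg i)) := IH _ hlt hsW
        -- multiply by g i
        have himg : s * g i ∈ Submodule.map (LinearMap.mulRight ℂ (g i))
            (Submodule.span ℂ (genSet b g cdeg Dstar (d - cdeg i))) :=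
          ⟨s, hsp, rfl⟩
        rw [Submodule.map_span] at himg
        refine Submodule.span_le.mpr ?_ himg
        rintro x ⟨y, ⟨β, α, hyd, hyD, hy⟩, rfl⟩
        refine Submodule.subset_span ⟨fun j => β j + (if j = i then 1 else 0), α, ?_, hyD, ?_⟩
        · have : ∑ j, (β j + (if j = i then 1 else 0)) * cdeg j
              = (∑ j, β j * cdeg j) + cdeg i := by
            simp only [add_mul, ite_mul, one_mul, zero_mul]
            rw [Finset.sum_add_distrib]
            simp
          rw [this]
          omega
        · simp only [LinearMap.mulRight_apply, hy]
          have hprod : ∏ j, g j ^ (β j + (if j = i then 1 else 0))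
              = (∏ j, g j ^ β j) * g i := by
            simp only [pow_add, pow_ite, pow_one, pow_zero]
            rw [Finset.prod_mul_distrib]
            simp
          rw [hprod]
          ring
      · have hmul : (DirectSum.decompose (weightedHomogeneousSubmodule ℂ b) ((r i) * g i) d : R')
            = 0 :=
          DirectSum.coe_decompose_mul_of_right_mem_of_not_le _ (hg i) (by omega)
        rw [hmul]
        exact Submodule.zero_mem _


lemma sum_shift (u : ℕ → ℕ) (A X : ℕ) :
    ∑ d ∈ Finset.range (X+1), (if A ≤ d then u (d - A) else 0)
      = if A ≤ X then ∑ e ∈ Finset.range (X - A + 1), u e else 0 := by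
  induction X with
  | zero =>
      rcases Nat.eq_zero_or_pos A with rfl | hA
      · simp
      · rw [if_neg (by omega)]
        simp [Nat.not_le.mpr hA]
  | succ X ih =>
      rw [Finset.sum_range_succ, ih]
      rcases lt_trichotomy A (X+1) with h | h | h
      · rw [if_pos (by omega), if_pos (by omega), if_pos (by omega)]
        have h2 : X + 1 - A + 1 = (X - A + 1) + 1 := by omega
        have h3 : X + 1 - A = X - A + 1 := by omega
        rw [h2, Finset.sum_range_succ, h3, Finset.sum_range_succ, Finset.sum_range_succ]
      · subst h
        rw [if_neg (by omega), if_pos le_rfl, if_pos le_rfl]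
        simp
      · rw [if_neg (by omega), if_neg (by omega), if_neg (by omega)]

lemma key (hb : ∀ j, 0 < b j) (f : Fin n → MvPolynomial (Fin n) ℂ) (a : Fin n → ℕ)
    (hfh : ∀ i, f i ∈ W (a i))
    (hfr : ∀ i : Fin n, ∀ w, f i * w ∈ Ideal.span (f '' {j | j < i}) →
      w ∈ Ideal.span (f '' {j | j < i}))
    {ι : Type} [Fintype ι] (g : ι → MvPolynomial (Fin n) ℂ) (cdeg : ι → ℕ)
    (hg : ∀ i, g i ∈ W (cdeg i)) (hcpos : ∀ i, 0 < cdeg i)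
    (hcontain : Ideal.span (Set.range f) ≤ Ideal.span (Set.range g)) :
    n ≤ Fintype.card ι := by
  classical
  by_contra hlt
  push_neg at hlt
  -- basic setup
  have fdW : ∀ d, FiniteDimensional ℂ (W d) := fd_W b hb
  set Jn : ℕ → Ideal (MvPolynomial (Fin n) ℂ) :=
    fun k => Ideal.span (f '' {j : Fin n | (j : ℕ) < k}) with hJn
  have hJhom : ∀ k, Ideal.IsHomogeneous (weightedHomogeneousSubmodule ℂ b) (Jn k) := by
    intro k
    refine Ideal.homogeneous_span _ _ ?_
    rintro x ⟨j, _, rfl⟩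
    exact ⟨a j, hfh j⟩
  have hJmono : ∀ k k', k ≤ k' → Jn k ≤ Jn k' := by
    intro k k' hk
    exact Ideal.span_mono (Set.image_mono (fun j hj => lt_of_lt_of_le hj hk))
  set md : ℕ → ℕ := fun d => finrank ℂ (W d) with hmd
  set rk : ℕ → ℕ → ℕ :=
    fun k d => finrank ℂ ↥((Jn k).restrictScalars ℂ ⊓ W d) with hrk
  set hh : ℕ → ℕ → ℕ := fun k d => md d - rk k d with hhh
  set ck : ℕ → ℕ → ℕ := fun k D => ∑ d ∈ Finset.range (D+1), hh k d with hck
  have hrm : ∀ k d, rk k d ≤ md d := by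
    intro k d
    haveI := fdW d
    exact Submodule.finrank_mono inf_le_right
  have hrmono : ∀ k k' d, k ≤ k' → rk k d ≤ rk k' d := by
    intro k k' d hk
    haveI := fdW d
    haveI : FiniteDimensional ℂ ↥((Jn k').restrictScalars ℂ ⊓ W d) :=
      Submodule.finiteDimensional_of_le inf_le_right
    exact Submodule.finrank_mono
      (inf_le_inf_right _ (fun x hx => (hJmono k k' hk) hx))
  set aa : ℕ → ℕ := fun k => if hkn : k < n then a ⟨k, hkn⟩ else 1 with haa
  -- pointwise recursion
  have hpoint : ∀ k, k < n → ∀ d : ℕ,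
      hh k d = hh (k+1) d + (if aa k ≤ d then hh k (d - aa k) else 0) := by
    intro k hkn d
    have hi : aa k = a ⟨k, hkn⟩ := dif_pos hkn
    have hKsup : Jn (k+1) = Jn k ⊔ Ideal.span {f ⟨k, hkn⟩} := by
      have hsets : {j : Fin n | (j : ℕ) < k + 1} = {j : Fin n | (j : ℕ) < k} ∪ {⟨k, hkn⟩} := by
        ext j
        simp only [Set.mem_setOf_eq, Set.mem_union, Set.mem_singleton_iff, Fin.ext_iff]
        omega
      simp only [hJn]
      rw [hsets, Set.image_union, Set.image_singleton, Ideal.span_union]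
    have hregk : ∀ w, f ⟨k, hkn⟩ * w ∈ Jn k → w ∈ Jn k := by
      intro w hw
      have hset : {j : Fin n | j < (⟨k, hkn⟩ : Fin n)} = {j : Fin n | (j : ℕ) < k} := by
        ext j; exact Iff.rfl
      have := hfr ⟨k, hkn⟩ w (by rw [hset]; exact hw)
      rwa [hset] at this
    rcases le_or_gt (aa k) d with hle | hgt
    · have heq := step_eq b hb (hfh ⟨k, hkn⟩) hKsup hregk (hJhom k) (hi ▸ hle)
      have e1 : rk k d ≤ rk (k+1) d := hrmono k (k+1) d (by omega)
      have e2 : rk k (d - aa k) ≤ md (d - aa k) := hrm _ _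
      have e3 : rk (k+1) d ≤ md d := hrm _ _
      rw [if_pos hle]
      have heq' : md (d - aa k) + rk k d = rk (k+1) d + rk k (d - aa k) := by
        rw [hi]
        exact heq
      simp only [hhh]
      omega
    · have heq := step_lt b (hfh ⟨k, hkn⟩) hKsup (hJhom k) (hi ▸ hgt)
      have : rk (k+1) d = rk k d := by
        simp only [hrk]
        exact congrArg (fun S : Submodule ℂ (MvPolynomial (Fin n) ℂ) => finrank ℂ ↥S) heq
      rw [if_neg (by omega)]
      simp only [hhh]
      omega
  -- recursion for partial sums
  have hcrec : ∀ k, k < n → ∀ X,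
      ck k X = ck (k+1) X + (if aa k ≤ X then ck k (X - aa k) else 0) := by
    intro k hkn X
    simp only [hck]
    calc ∑ d ∈ Finset.range (X+1), hh k d
        = ∑ d ∈ Finset.range (X+1),
            (hh (k+1) d + (if aa k ≤ d then hh k (d - aa k) else 0)) :=
          Finset.sum_congr rfl (fun d _ => hpoint k hkn d)
      _ = (∑ d ∈ Finset.range (X+1), hh (k+1) d)
          + ∑ d ∈ Finset.range (X+1), (if aa k ≤ d then hh k (d - aa k) else 0) :=
          Finset.sum_add_distrib
      _ = (∑ d ∈ Finset.range (X+1), hh (k+1) d)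
          + (if aa k ≤ X then ∑ e ∈ Finset.range (X - aa k + 1), hh k e else 0) := by
          rw [sum_shift]
  have hcmono : ∀ k : ℕ, ∀ {X Y : ℕ}, X ≤ Y → ck k X ≤ ck k Y := by
    intro k X Y hXY
    apply Finset.sum_le_sum_of_subset
    intro d hd
    simp only [Finset.mem_range] at *
    omega
  -- bound on ck 0
  have hc0 : ∀ X, ck 0 X ≤ (X+1)^n := by
    intro X
    have hr0 : ∀ d, rk 0 d = 0 := by
      intro d
      have hbot : Jn 0 = ⊥ := by
        have hset : {j : Fin n | (j : ℕ) < 0} = ∅ := by ext j; simp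
        simp only [hJn]
        rw [hset, Set.image_empty, Ideal.span_empty]
      simp only [hrk]
      rw [hbot, Submodule.restrictScalars_bot, bot_inf_eq]
      exact finrank_bot ℂ _
    set Fd : ℕ → Finset (Fin n →₀ ℕ) :=
      fun d => (expFinset n X).filter (fun α => Finsupp.weight b α = d) with hFd
    have hmdle : ∀ d, d ≤ X → md d ≤ (Fd d).card := by
      intro d hd
      set Fm : Finset (MvPolynomial (Fin n) ℂ) :=
        (Fd d).image (fun α => monomial α (1 : ℂ)) with hFm
      have hWle : W d ≤ Submodule.span ℂ (Fm : Set (MvPolynomial (Fin n) ℂ)) := by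
        intro p hp
        rw [hFm, Finset.coe_image]
        refine mem_span_monomials hp (Fd d) ?_
        intro α hα
        exact Finset.mem_filter.mpr ⟨mem_expFinset hb (by omega), hα⟩
      haveI : FiniteDimensional ℂ
          (Submodule.span ℂ (Fm : Set (MvPolynomial (Fin n) ℂ))) :=
        FiniteDimensional.span_of_finite ℂ (Finset.finite_toSet _)
      calc md d ≤ finrank ℂ (Submodule.span ℂ (Fm : Set (MvPolynomial (Fin n) ℂ))) :=
            Submodule.finrank_mono hWle
        _ ≤ Fm.card := finrank_span_finset_le_card Fm
        _ ≤ (Fd d).card := Finset.card_image_le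
    have hdisj : ∀ d ∈ Finset.range (X+1), ∀ d' ∈ Finset.range (X+1), d ≠ d' →
        Disjoint (Fd d) (Fd d') := by
      intro d _ d' _ hdd'
      refine Finset.disjoint_left.mpr ?_
      intro α hα hα'
      rw [hFd, Finset.mem_filter] at hα hα'
      omega
    calc ck 0 X = ∑ d ∈ Finset.range (X+1), (md d - rk 0 d) := rfl
      _ = ∑ d ∈ Finset.range (X+1), md d :=
          Finset.sum_congr rfl (fun d _ => by rw [hr0]; omega)
      _ ≤ ∑ d ∈ Finset.range (X+1), (Fd d).card :=
          Finset.sum_le_sum (fun d hd => hmdle d (by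
            simp only [Finset.mem_range] at hd; omega))
      _ = ((Finset.range (X+1)).biUnion Fd).card := (Finset.card_biUnion hdisj).symm
      _ ≤ (expFinset n X).card := Finset.card_le_card (by
            intro α hα
            rw [Finset.mem_biUnion] at hα
            obtain ⟨d, _, hαd⟩ := hα
            exact (Finset.mem_filter.mp hαd).1)
      _ ≤ (X+1)^n := card_expFinset n X
  -- main uniform bound
  set P : ℕ := ((∑ i ∈ Finset.range n, aa i) + 1)^n with hP
  have hckn : ∀ D, ck n D ≤ P := partB n aa ck hcmono hcrec hc0
  -- the big ideal
  set Jbig : Ideal (MvPolynomial (Fin n) ℂ) := Ideal.span (Set.range g) with hJbig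
  have hJnle : Jn n ≤ Jbig := by
    refine le_trans ?_ hcontain
    exact Ideal.span_mono (by rintro x ⟨j, _, rfl⟩; exact ⟨j, rfl⟩)
  set rbig : ℕ → ℕ := fun d => finrank ℂ ↥(Jbig.restrictScalars ℂ ⊓ W d) with hrbig
  set hbig : ℕ → ℕ := fun d => md d - rbig d with hhbig
  have hbig_le : ∀ d, hbig d ≤ hh n d := by
    intro d
    haveI := fdW d
    haveI : FiniteDimensional ℂ ↥(Jbig.restrictScalars ℂ ⊓ W d) :=
      Submodule.finiteDimensional_of_le inf_le_right
    have : rk n d ≤ rbig d :=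
      Submodule.finrank_mono (inf_le_inf_right _ (fun x hx => hJnle hx))
    simp only [hhbig, hhh]
    omega
  have hcbig : ∀ D, ∑ d ∈ Finset.range (D+1), hbig d ≤ P := by
    intro D
    calc ∑ d ∈ Finset.range (D+1), hbig d ≤ ∑ d ∈ Finset.range (D+1), hh n d :=
          Finset.sum_le_sum (fun d _ => hbig_le d)
      _ ≤ P := hckn D
  -- the set of degrees with nonzero quotient is finite
  have hfin : {d : ℕ | hbig d ≠ 0}.Finite := by
    by_contra hinf
    obtain ⟨t, hts, htc⟩ := Set.Infinite.exists_subset_card_eq hinf (P+1)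
    have hne : t.Nonempty := Finset.card_pos.mp (by omega)
    set D := t.max' hne with hD
    have h1 : P + 1 ≤ ∑ d ∈ Finset.range (D+1), hbig d := by
      calc P + 1 = ∑ _d ∈ t, 1 := by rw [Finset.sum_const, htc, smul_eq_mul, mul_one]
        _ ≤ ∑ d ∈ t, hbig d := Finset.sum_le_sum (fun d hd => by
            have : hbig d ≠ 0 := hts hd
            omega)
        _ ≤ ∑ d ∈ Finset.range (D+1), hbig d := Finset.sum_le_sum_of_subset (by
            intro d hd
            simp only [Finset.mem_range]
            have := Finset.le_max' t d hd
            omega)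
    have := hcbig D
    omega
  obtain ⟨Dstar, hDstar⟩ := hfin.bddAbove
  have hhigh : ∀ d : ℕ, Dstar < d → (W d) ≤ Jbig.restrictScalars ℂ := by
    intro d hd
    have h0 : hbig d = 0 := by
      by_contra h
      have : d ≤ Dstar := hDstar h
      omega
    haveI := fdW d
    have heq : Jbig.restrictScalars ℂ ⊓ W d = W d := by
      apply Submodule.eq_of_le_of_finrank_le inf_le_right
      have : rbig d ≤ md d := by
        haveI : FiniteDimensional ℂ ↥(Jbig.restrictScalars ℂ ⊓ W d) :=
          Submodule.finiteDimensional_of_le inf_le_right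
        exact Submodule.finrank_mono inf_le_right
      simp only [hhbig] at h0
      show md d ≤ rbig d
      omega
    intro p hp
    have : p ∈ Jbig.restrictScalars ℂ ⊓ W d := by rw [heq]; exact hp
    exact this.1
  have hgen := partC b g cdeg hg hcpos Dstar hhigh
  -- counting
  set B : ℕ := (∑ j, b j) + 1 with hB
  have hBub : ∀ j, b j ≤ B := by
    intro j
    have : b j ≤ ∑ j', b j' :=
      Finset.single_le_sum (fun j' _ => Nat.zero_le _) (Finset.mem_univ j)
    omega
  set mι : ℕ := Fintype.card ι with hmι
  set E : ℕ := B^(n-1) * (Dstar+1)^n with hE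
  set D : ℕ := E * B with hDdef
  -- the family of monomials
  set famα : (Fin n → Fin (E+1)) → (Fin n →₀ ℕ) :=
    fun q => Finsupp.equivFunOnFinite.symm (fun j => (q j : ℕ)) with hfam
  have hinj : Function.Injective famα := by
    intro q q' h
    funext j
    have : ((q j : ℕ)) = ((q' j : ℕ)) := by
      have := congrArg (fun α => (Finsupp.equivFunOnFinite α) j) h
      simpa [hfam] using this
    exact Fin.ext this
  have hwfam : ∀ q, Finsupp.weight b (famα q) ≤ D := by
    intro q
    rw [Finsupp.weight_apply]
    calc (famα q).sum (fun i c => c • b i)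
        ≤ ∑ j, (famα q) j • b j := Finset.sum_le_sum_of_subset (Finset.subset_univ _)
      _ ≤ ∑ j, E * b j := Finset.sum_le_sum (fun j _ => by
          have h1 : (famα q) j = (q j : ℕ) := by simp [hfam]
          have h2 : (q j : ℕ) ≤ E := by omega
          simp only [smul_eq_mul, h1]
          exact Nat.mul_le_mul_right _ h2)
      _ = E * ∑ j, b j := by rw [Finset.mul_sum]
      _ ≤ E * B := Nat.mul_le_mul_left _ (by omega)
  set genLE : Set (MvPolynomial (Fin n) ℂ) :=
    {x | ∃ (β : ι → ℕ) (α : Fin n →₀ ℕ),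
      (∑ i, β i * cdeg i) + Finsupp.weight b α ≤ D ∧ Finsupp.weight b α ≤ Dstar ∧
      x = (∏ i, g i ^ β i) * monomial α 1} with hgenLE
  have hgensub : ∀ d : ℕ, d ≤ D → genSet b g cdeg Dstar d ⊆ genLE := by
    rintro d hd x ⟨β, α, h1, h2, h3⟩
    exact ⟨β, α, by omega, h2, h3⟩
  set U : Submodule ℂ (MvPolynomial (Fin n) ℂ) := Submodule.span ℂ genLE with hU
  have hvU : ∀ q, monomial (famα q) (1:ℂ) ∈ U := by
    intro q
    have h1 : monomial (famα q) (1:ℂ) ∈ W (Finsupp.weight b (famα q)) :=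
      isWeightedHomogeneous_monomial b (famα q) 1 rfl
    have h2 := hgen (Finsupp.weight b (famα q)) h1
    exact Submodule.span_mono (hgensub _ (hwfam q)) h2
  -- U is spanned by few elements
  set Fbig : Finset (MvPolynomial (Fin n) ℂ) :=
    ((Finset.univ : Finset (ι → Fin (D+1))) ×ˢ expFinset n Dstar).image
      (fun q => (∏ i, g i ^ ((q.1 i : ℕ))) * monomial q.2 (1:ℂ)) with hFbig
  have hUsub : genLE ⊆ (Fbig : Set (MvPolynomial (Fin n) ℂ)) := by
    rintro x ⟨β, α, h1, h2, h3⟩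
    have hβ : ∀ i, β i ≤ D := by
      intro i
      have hs : β i * cdeg i ≤ ∑ i', β i' * cdeg i' :=
        Finset.single_le_sum (f := fun i' => β i' * cdeg i') (fun i' _ => Nat.zero_le _)
          (Finset.mem_univ i)
      have : 1 ≤ cdeg i := hcpos i
      nlinarith
    rw [hFbig]
    refine Finset.mem_coe.mpr (Finset.mem_image.mpr
      ⟨(fun i => ⟨β i, by have := hβ i; omega⟩, α), ?_, ?_⟩)
    · exact Finset.mem_product.mpr ⟨Finset.mem_univ _, mem_expFinset hb h2⟩
    · rw [h3]
  haveI : FiniteDimensional ℂ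
      (Submodule.span ℂ (Fbig : Set (MvPolynomial (Fin n) ℂ))) :=
    FiniteDimensional.span_of_finite ℂ (Finset.finite_toSet _)
  haveI hUfd : FiniteDimensional ℂ U :=
    Submodule.finiteDimensional_of_le (Submodule.span_mono hUsub)
  have hUcard : finrank ℂ U ≤ (D+1)^mι * (Dstar+1)^n := by
    calc finrank ℂ U
        ≤ finrank ℂ (Submodule.span ℂ (Fbig : Set (MvPolynomial (Fin n) ℂ))) :=
          Submodule.finrank_mono (Submodule.span_mono hUsub)
      _ ≤ Fbig.card := finrank_span_finset_le_card Fbig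
      _ ≤ ((Finset.univ : Finset (ι → Fin (D+1))) ×ˢ expFinset n Dstar).card :=
          Finset.card_image_le
      _ = (D+1)^mι * (expFinset n Dstar).card := by
          rw [Finset.card_product]
          congr 1
          simp [Fintype.card_fun, hmι]
      _ ≤ (D+1)^mι * (Dstar+1)^n :=
          Nat.mul_le_mul_left _ (card_expFinset n Dstar)
  -- linear independence gives the lower bound
  have hli : LinearIndependent ℂ (fun q : Fin n → Fin (E+1) => monomial (famα q) (1:ℂ)) := by
    have h1 := (basisMonomials (Fin n) ℂ).linearIndependent
    have h2 := h1.comp famα hinj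
    have h3 : (fun q : Fin n → Fin (E+1) => monomial (famα q) (1:ℂ))
        = (⇑(basisMonomials (Fin n) ℂ) ∘ famα) := by
      funext q
      simp [coe_basisMonomials]
    rw [h3]
    exact h2
  set v' : (Fin n → Fin (E+1)) → U := fun q => ⟨monomial (famα q) (1:ℂ), hvU q⟩ with hv'
  have hli' : LinearIndependent ℂ v' := by
    apply LinearIndependent.of_comp U.subtype
    exact hli
  have hcard : (E+1)^n ≤ finrank ℂ U := by
    have := hli'.fintype_card_le_finrank
    rwa [Fintype.card_fun, Fintype.card_fin, Fintype.card_fin] at this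
  -- final numeric contradiction
  have hn1 : 1 ≤ n := by omega
  have hmn : mι ≤ n - 1 := by omega
  have hD1 : (D+1)^mι ≤ ((E+1) * B)^(n-1) := by
    calc (D+1)^mι ≤ (D+1)^(n-1) := Nat.pow_le_pow_right (by omega) hmn
      _ ≤ ((E+1) * B)^(n-1) := Nat.pow_le_pow_left (by
          have h1B : 1 ≤ B := by omega
          rw [hDdef]
          nlinarith) _
  have hfinal : (E+1)^n ≤ (E+1)^(n-1) * E := by
    calc (E+1)^n ≤ (D+1)^mι * (Dstar+1)^n := le_trans hcard hUcard
      _ ≤ ((E+1) * B)^(n-1) * (Dstar+1)^n := Nat.mul_le_mul_right _ hD1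
      _ = (E+1)^(n-1) * (B^(n-1) * (Dstar+1)^n) := by rw [mul_pow]; ring
      _ = (E+1)^(n-1) * E := by rw [hE]
  have hgt : (E+1)^(n-1) * E < (E+1)^n := by
    have h1 : (E+1)^n = (E+1)^(n-1) * (E+1) := by
      rw [← pow_succ]
      congr 1
      omega
    have h2 : 0 < (E+1)^(n-1) := pow_pos (by omega) _
    rw [h1]
    exact (Nat.mul_lt_mul_left h2).mpr (by omega)
  omega

end Stmt2Aux

/-- A regular sequence of maximal length on `ℂ[x_1,…,x_n]` (graded with `deg xᵢ = bᵢ`)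
consisting of nonzero weighted-homogeneous polynomials: each `f i` is a non-zero-divisor
modulo the ideal generated by the previous ones, and the ideal generated by all of them
is proper. -/
def IsHomRegularSeq {n m : ℕ} (b : Fin n → ℕ) (a : Fin m → ℕ)
    (f : Fin m → MvPolynomial (Fin n) ℂ) : Prop :=
  (∀ i, f i ≠ 0) ∧
  (∀ i, MvPolynomial.IsWeightedHomogeneous b (f i) (a i)) ∧
  (∀ i : Fin m,
    Ideal.Quotient.mk (Ideal.span (f '' {j | j < i})) (f i) ∈
      nonZeroDivisors (MvPolynomial (Fin n) ℂ ⧸ Ideal.span (f '' {j | j < i}))) ∧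
  Ideal.span (Set.range f) ≠ ⊤

/-- **Proposition 3.4, direction 1 ⟹ 2.** If there is a regular sequence of
weighted-homogeneous elements `f_1,…,f_n` with `deg fᵢ = aᵢ` in `ℂ[x_1,…,x_n]`
with `deg xᵢ = bᵢ`, then for every subset of indices `I`, the number of `i` with
`aᵢ` in the numerical semigroup generated by `{b_j : j ∈ I}` is at least `#I`. -/
theorem stmt_2 (n : ℕ) (a b : Fin n → ℕ) (ha : ∀ i, 0 < a i) (hb : ∀ i, 0 < b i)
    (hreg : ∃ f : Fin n → MvPolynomial (Fin n) ℂ, IsHomRegularSeq b a f) :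
    ∀ I : Finset (Fin n),
      I.card ≤ (Finset.univ.filter
        (fun i => a i ∈ AddSubmonoid.closure ((I.image b : Finset ℕ) : Set ℕ))).card := by
  classical
  intro I
  by_contra hcon
  push_neg at hcon
  obtain ⟨f, hf0, hfhom, hfreg, hfproper⟩ := hreg
  set T : Finset (Fin n) := Finset.univ.filter
    (fun i => a i ∈ AddSubmonoid.closure ((I.image b : Finset ℕ) : Set ℕ)) with hTdef
  -- translate regularity
  have hfr : ∀ i : Fin n, ∀ w, f i * w ∈ Ideal.span (f '' {j | j < i}) →
      w ∈ Ideal.span (f '' {j | j < i}) := by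
    intro i w hw
    have h1 : (Ideal.Quotient.mk (Ideal.span (f '' {j | j < i})) w) *
        (Ideal.Quotient.mk (Ideal.span (f '' {j | j < i})) (f i)) = 0 := by
      rw [← map_mul, mul_comm]
      exact Ideal.Quotient.eq_zero_iff_mem.mpr hw
    have h2 := (mem_nonZeroDivisors_iff.mp (hfreg i)).2 _ h1
    exact Ideal.Quotient.eq_zero_iff_mem.mp h2
  have hfh : ∀ i, f i ∈ MvPolynomial.weightedHomogeneousSubmodule ℂ b (a i) := by
    intro i
    exact (MvPolynomial.mem_weightedHomogeneousSubmodule ℂ b (a i) (f i)).mpr (hfhom i)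
  -- the small generating family
  set g : (↥T ⊕ ↥(Iᶜ)) → MvPolynomial (Fin n) ℂ :=
    Sum.elim (fun i => f i.1)
      (fun j => MvPolynomial.monomial (Finsupp.single j.1 1) (1 : ℂ)) with hgdef
  set cdeg : (↥T ⊕ ↥(Iᶜ)) → ℕ := Sum.elim (fun i => a i.1) (fun j => b j.1) with hcdef
  have hwsingle : ∀ j : Fin n, Finsupp.weight b (Finsupp.single j 1) = b j := by
    intro j
    rw [Finsupp.weight_apply, Finsupp.sum_single_index]
    · simp
    · simp
  have hg : ∀ i, g i ∈ MvPolynomial.weightedHomogeneousSubmodule ℂ b (cdeg i) := by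
    rintro (⟨i, hi⟩ | ⟨j, hj⟩)
    · exact hfh i
    · refine (MvPolynomial.mem_weightedHomogeneousSubmodule ℂ b _ _).mpr ?_
      exact MvPolynomial.isWeightedHomogeneous_monomial b _ _ (hwsingle j)
  have hcpos : ∀ i, 0 < cdeg i := by
    rintro (⟨i, hi⟩ | ⟨j, hj⟩)
    · exact ha i
    · exact hb j
  have hcontain : Ideal.span (Set.range f) ≤ Ideal.span (Set.range g) := by
    rw [Ideal.span_le]
    rintro x ⟨i, rfl⟩
    by_cases hi : i ∈ T
    · exact Ideal.subset_span ⟨Sum.inl ⟨i, hi⟩, rfl⟩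
    · have hai : a i ∉ AddSubmonoid.closure ((I.image b : Finset ℕ) : Set ℕ) := by
        intro h
        exact hi (Finset.mem_filter.mpr ⟨Finset.mem_univ _, h⟩)
      rw [← MvPolynomial.support_sum_monomial_coeff (f i)]
      refine Submodule.sum_mem _ (fun α hα => ?_)
      have hwα : Finsupp.weight b α = a i := hfhom i (MvPolynomial.mem_support_iff.mp hα)
      have hEx : ∃ j, j ∉ I ∧ α j ≠ 0 := by
        by_contra hno
        push_neg at hno
        apply hai
        rw [← hwα, Finsupp.weight_apply]
        refine AddSubmonoid.sum_mem _ (fun j hj => ?_)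
        have hjI : j ∈ I := by
          by_contra hjn
          exact (Finsupp.mem_support_iff.mp hj) (hno j hjn)
        exact nsmul_mem (AddSubmonoid.subset_closure
          (Finset.mem_coe.mpr (Finset.mem_image_of_mem b hjI))) _
      obtain ⟨j, hjI, hαj⟩ := hEx
      have hle : Finsupp.single j 1 ≤ α := by
        rw [Finsupp.single_le_iff]
        omega
      have hsplit : MvPolynomial.monomial α (MvPolynomial.coeff α (f i))
          = MvPolynomial.monomial (Finsupp.single j 1) (1 : ℂ)
            * MvPolynomial.monomial (α - Finsupp.single j 1) (MvPolynomial.coeff α (f i)) := by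
        rw [MvPolynomial.monomial_mul, one_mul, add_tsub_cancel_of_le hle]
      rw [hsplit]
      exact Ideal.mul_mem_right _ _
        (Ideal.subset_span ⟨Sum.inr ⟨j, Finset.mem_compl.mpr hjI⟩, rfl⟩)
  have hkey := Stmt2Aux.key b hb f a hfh hfr g cdeg hg hcpos hcontain
  have hcards : Fintype.card (↥T ⊕ ↥(Iᶜ)) = T.card + (n - I.card) := by
    simp [Finset.card_compl]
  have hIle : I.card ≤ n := by
    simpa using Finset.card_le_univ I
  rw [hcards] at hkey
  omega
end

section
/- Let m ≥ n ≥ 1 and let a_1,…,a_m and b_1,…,b_n be positive integers such that the multiset union ⨄_{j=1}^n D(b_j) is contained, as a multiset, in ⨄_{i=1}^m D(a_i). Let I ⊆ {1,…,n} be nonempty and let g = gcd{b_j : j ∈ I}. Then the number of indices i ∈ {1,…,m} (counted with multiplicity) such that g divides a_i is at least #I. -/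
open scoped Classical

/-- **Step in the proof of Theorem 3.8.** Let `m ≥ n ≥ 1` and `a_1,…,a_m`, `b_1,…,b_n`
be positive integers such that the multiset union of the divisor multisets `D(bⱼ)` is
contained (as a multiset) in the multiset union of the `D(aᵢ)`. Then for every nonempty
`I ⊆ {1,…,n}`, setting `g = gcd{bⱼ : j ∈ I}`, the number of indices `i` with `g ∣ aᵢ`
is at least `#I`. -/
theorem stmt_10 (m n : ℕ) (hn : 1 ≤ n) (hmn : n ≤ m) (a : Fin m → ℕ) (b : Fin n → ℕ)
    (ha : ∀ i, 0 < a i) (hb : ∀ j, 0 < b j)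
    (hsub : (∑ j, ((b j).divisors.val : Multiset ℕ)) ≤ ∑ i, ((a i).divisors.val : Multiset ℕ))
    (I : Finset (Fin n)) (hI : I.Nonempty) :
    I.card ≤ (Finset.univ.filter (fun i : Fin m => I.gcd b ∣ a i)).card := by
  set g := I.gcd b with hg
  have hcount := Multiset.count_le_of_le g hsub
  have hL : I.card ≤ Multiset.count g (∑ j, ((b j).divisors.val : Multiset ℕ)) := by
    rw [Multiset.count_sum']
    calc I.card = ∑ j ∈ I, 1 := by simp
    _ ≤ ∑ j, Multiset.count g ((b j).divisors.val) := by
        apply Finset.sum_le_sum_of_subset_of_nonneg (Finset.subset_univ I) (by intros; positivity)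
          |>.trans_eq' ?_
        apply Finset.sum_congr rfl
        intro j hj
        have : g ∈ (b j).divisors := Nat.mem_divisors.2 ⟨Finset.gcd_dvd hj, (hb j).ne'⟩
        simp [Multiset.count_eq_one_of_mem (b j).divisors.nodup this]
  have hR : Multiset.count g (∑ i, ((a i).divisors.val : Multiset ℕ))
      = (Finset.univ.filter (fun i : Fin m => g ∣ a i)).card := by
    rw [Multiset.count_sum', Finset.card_filter]
    apply Finset.sum_congr rfl
    intro i _
    by_cases hd : g ∣ a i
    · have : g ∈ (a i).divisors := Nat.mem_divisors.2 ⟨hd, (ha i).ne'⟩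
      simp [hd, Multiset.count_eq_one_of_mem (a i).divisors.nodup this]
    · have : g ∉ (a i).divisors := fun h => hd (Nat.mem_divisors.1 h).1
      simp [hd, Multiset.count_eq_zero_of_notMem (s := (a i).divisors.val) this]
  exact hL.trans (hcount.trans_eq hR)
end

section
/- Let m ≥ n ≥ 1 and let a_1,…,a_m and b_1,…,b_n be positive integers. If ∏_{j=1}^n (1−q^{b_j}) divides ∏_{i=1}^m (1−q^{a_i}) in ℤ[q], then for every j ∈ {1,…,n} there exists i ∈ {1,…,m} such that b_j divides a_i. -/
open Polynomial

lemma cyc_dvd_imp_dvd {d a : ℕ} (hd : 0 < d) (ha : 0 < a)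
    (h : cyclotomic d ℤ ∣ X ^ a - 1) : d ∣ a := by
  have hmap : cyclotomic d ℂ ∣ X ^ a - 1 := by
    have := Polynomial.map_dvd (Int.castRingHom ℂ) h
    simpa [map_cyclotomic] using this
  have hζ := Complex.isPrimitiveRoot_exp d hd.ne'
  set ζ := Complex.exp (2 * Real.pi * Complex.I / d)
  have hroot : IsRoot (cyclotomic d ℂ) ζ := hζ.isRoot_cyclotomic hd
  have hroot2 : IsRoot (X ^ a - 1 : ℂ[X]) ζ := by
    obtain ⟨c, hc⟩ := hmap
    simp [hc, IsRoot, hroot.eq_zero]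
  have : ζ ^ a = 1 := by
    have := hroot2
    simpa [IsRoot, sub_eq_zero] using this
  exact hζ.dvd_of_pow_eq_one a this

/-- **Remark 4.3.** Let `m ≥ n ≥ 1` and `a_1,…,a_m`, `b_1,…,b_n` be positive integers.
If `∏ⱼ (1 - q^{bⱼ})` divides `∏ᵢ (1 - q^{aᵢ})` in `ℤ[q]`, then for every `j` there
exists `i` such that `bⱼ ∣ aᵢ`. -/
theorem stmt_11 (m n : ℕ) (hn : 1 ≤ n) (hmn : n ≤ m) (a : Fin m → ℕ) (b : Fin n → ℕ)
    (ha : ∀ i, 0 < a i) (hb : ∀ j, 0 < b j)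
    (hdvd : (∏ j, (1 - X ^ (b j)) : ℤ[X]) ∣ ∏ i, (1 - X ^ (a i))) :
    ∀ j, ∃ i, b j ∣ a i := by
  intro j
  have hprime : Prime (cyclotomic (b j) ℤ) :=
    (cyclotomic.irreducible (hb j)).prime
  have h1 : cyclotomic (b j) ℤ ∣ ∏ i, (1 - X ^ (a i)) := by
    refine dvd_trans ?_ hdvd
    refine dvd_trans ?_ (Finset.dvd_prod_of_mem _ (Finset.mem_univ j))
    have := cyclotomic.dvd_X_pow_sub_one (b j) ℤ
    have h2 : (1 - X ^ (b j) : ℤ[X]) = -(X ^ (b j) - 1) := by ring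
    rw [h2]
    exact this.neg_right
  obtain ⟨i, _, hi⟩ := hprime.exists_mem_finset_dvd h1
  refine ⟨i, cyc_dvd_imp_dvd (hb j) (ha i) ?_⟩
  have h2 : (X ^ (a i) - 1 : ℤ[X]) = -(1 - X ^ (a i)) := by ring
  rw [h2]
  exact hi.neg_right
end

section
/- Let m ≥ n ≥ 1 and let a_1,…,a_m and b_1,…,b_n be positive integers such that ∏_{j=1}^n (1−q^{b_j}) divides ∏_{i=1}^m (1−q^{a_i}) in ℤ[q], and let Δ denote the multiset difference (⨄_{i=1}^m D(a_i)) \ (⨄_{j=1}^n D(b_j)). Suppose Δ can be written as a multiset sum Δ = M_1 ⊎ … ⊎ M_r, where for each t there are a prime p_t, an integer k_t ≥ 1, and a positive integer d_t with p_t ∤ d_t such that M_t is the multiset [p_t^{k_t}·d' : d' a positive divisor of d_t]. Then the unique polynomial P ∈ ℤ[q] with P·∏_{j=1}^n (1−q^{b_j}) = ∏_{i=1}^m (1−q^{a_i}) has all coefficients nonnegative. -/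
open Polynomial

namespace Stmt13Aux

/-- product of cyclotomic polynomials over a multiset of indices -/
noncomputable def F (s : Multiset ℕ) : ℤ[X] := (s.map fun c => cyclotomic c ℤ).prod

lemma F_add (s t : Multiset ℕ) : F (s + t) = F s * F t := by
  simp [F, Multiset.prod_add]

lemma F_divisors {n : ℕ} (hn : 0 < n) : F n.divisors.val = X ^ n - 1 := by
  rw [← prod_cyclotomic_eq_X_pow_sub_one hn ℤ, Finset.prod_eq_multiset_prod, F]

lemma F_sum {ι : Type*} (s : Finset ι) (f : ι → Multiset ℕ) :
    F (∑ i ∈ s, f i) = ∏ i ∈ s, F (f i) := by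
  classical
  induction s using Finset.cons_induction with
  | empty => simp [F]
  | cons i s hi ih => rw [Finset.sum_cons, Finset.prod_cons, F_add, ih]

lemma mem_multiset_sum {ι : Type*} {s : Finset ι} {f : ι → Multiset ℕ} {c : ℕ}
    (hc : c ∈ ∑ i ∈ s, f i) : ∃ i ∈ s, c ∈ f i := by
  classical
  induction s using Finset.cons_induction with
  | empty => simp at hc
  | cons i s hi ih =>
    rw [Finset.sum_cons, Multiset.mem_add] at hc
    rcases hc with h | h
    · exact ⟨i, Finset.mem_cons_self i s, h⟩
    · obtain ⟨j, hj, hj'⟩ := ih h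
      exact ⟨j, Finset.mem_cons_of_mem hj, hj'⟩

lemma F_map_divisors (d : ℕ) (g : ℕ → ℕ) :
    F (d.divisors.val.map g) = ∏ d' ∈ d.divisors, cyclotomic (g d') ℤ := by
  rw [F, Multiset.map_map, Finset.prod_eq_multiset_prod]
  rfl

lemma block_mul {p d : ℕ} (hp : p.Prime) (hd : 0 < d) (hpd : ¬ p ∣ d) (k : ℕ) :
    F (d.divisors.val.map fun d' => p ^ (k + 1) * d') * (X ^ (p ^ k * d) - 1)
      = X ^ (p ^ (k + 1) * d) - 1 := by
  have hexpand : ∀ e : ℕ, (expand ℤ p) ((X : ℤ[X]) ^ e - 1) = X ^ (p * e) - 1 := by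
    intro e
    rw [map_sub, map_one, map_pow, expand_X, ← pow_mul]
  induction k with
  | zero =>
    rw [F_map_divisors]
    have key : (expand ℤ p) ((X : ℤ[X]) ^ d - 1)
        = (∏ d' ∈ d.divisors, cyclotomic (p ^ (0 + 1) * d') ℤ) * (X ^ d - 1) := by
      rw [← prod_cyclotomic_eq_X_pow_sub_one hd ℤ]
      rw [map_prod, ← Finset.prod_mul_distrib]
      refine Finset.prod_congr rfl fun d' hd' => ?_
      have hd'd : d' ∣ d := (Nat.mem_divisors.mp hd').1
      have hpd' : ¬ p ∣ d' := fun h => hpd (h.trans hd'd)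
      rw [cyclotomic_expand_eq_cyclotomic_mul hp hpd']
      rw [pow_one, mul_comm d' p]
    rw [show p ^ 0 * d = d by ring, ← key, hexpand]
    congr 2
    ring
  | succ k ih =>
    rw [F_map_divisors] at ih ⊢
    have hstep : ∀ d' : ℕ, cyclotomic (p ^ (k + 2) * d') ℤ
        = (expand ℤ p) (cyclotomic (p ^ (k + 1) * d') ℤ) := by
      intro d'
      rw [cyclotomic_expand_eq_cyclotomic hp ⟨p ^ k * d', by ring⟩]
      ring_nf
    calc (∏ d' ∈ d.divisors, cyclotomic (p ^ (k + 1 + 1) * d') ℤ) * (X ^ (p ^ (k + 1) * d) - 1)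
        = (expand ℤ p) ((∏ d' ∈ d.divisors, cyclotomic (p ^ (k + 1) * d') ℤ)
            * (X ^ (p ^ k * d) - 1)) := by
          rw [map_mul, map_prod, hexpand]
          congr 1
          · exact Finset.prod_congr rfl fun d' _ => hstep d'
          · congr 2
            ring
      _ = (expand ℤ p) ((X : ℤ[X]) ^ (p ^ (k + 1) * d) - 1) := by rw [ih]
      _ = X ^ (p ^ (k + 1 + 1) * d) - 1 := by rw [hexpand]; congr 2; ring

lemma X_pow_sub_one_ne_zero {e : ℕ} (he : 0 < e) : ((X : ℤ[X]) ^ e - 1) ≠ 0 := by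
  have := monic_X_pow_sub_C (1 : ℤ) he.ne'
  rw [map_one] at this
  exact this.ne_zero

lemma block_eq_geom {p d : ℕ} (hp : p.Prime) (hd : 0 < d) (hpd : ¬ p ∣ d) (k : ℕ) :
    F (d.divisors.val.map fun d' => p ^ (k + 1) * d')
      = ∑ i ∈ Finset.range p, ((X : ℤ[X]) ^ (p ^ k * d)) ^ i := by
  have he : 0 < p ^ k * d := Nat.mul_pos (Nat.pow_pos hp.pos) hd
  apply mul_right_cancel₀ (X_pow_sub_one_ne_zero he)
  rw [block_mul hp hd hpd k, geom_sum_mul, ← pow_mul]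
  congr 2
  ring

end Stmt13Aux

open Stmt13Aux

/-- **Proposition 4.1(1).** Let `m ≥ n ≥ 1` and `a_1,…,a_m`, `b_1,…,b_n` be positive
integers with `∏ⱼ (1 - q^{bⱼ}) ∣ ∏ᵢ (1 - q^{aᵢ})` in `ℤ[q]`. Let
`Δ = (⨄ᵢ D(aᵢ)) \ (⨄ⱼ D(bⱼ))` be the multiset difference of the divisor multisets.
If `Δ` is a multiset sum of multisets of the form `[p^k·d' : d' ∣ d]` with `p` prime,
`k ≥ 1` and `p ∤ d`, then the quotient polynomial has nonnegative coefficients. -/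
theorem stmt_13 (m n : ℕ) (hn : 1 ≤ n) (hmn : n ≤ m) (a : Fin m → ℕ) (b : Fin n → ℕ)
    (ha : ∀ i, 0 < a i) (hb : ∀ j, 0 < b j)
    (hdvd : (∏ j, (1 - X ^ (b j)) : ℤ[X]) ∣ ∏ i, (1 - X ^ (a i)))
    (hΔ : ∃ (r : ℕ) (p k d : Fin r → ℕ),
      (∀ t, (p t).Prime) ∧ (∀ t, 1 ≤ k t) ∧ (∀ t, 0 < d t) ∧ (∀ t, ¬ p t ∣ d t) ∧
      (∑ i, ((a i).divisors.val : Multiset ℕ)) - (∑ j, ((b j).divisors.val : Multiset ℕ)) =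
        ∑ t, ((d t).divisors.val.map (fun d' => p t ^ k t * d'))) :
    ∀ P : ℤ[X], P * ∏ j, (1 - X ^ (b j)) = ∏ i, (1 - X ^ (a i)) →
      ∀ j, 0 ≤ P.coeff j := by
  classical
  intro P hP j
  obtain ⟨r, p, k, d, hp, hk, hd, hpd, hEq⟩ := hΔ
  set A : Multiset ℕ := ∑ i, ((a i).divisors.val) with hA
  set B : Multiset ℕ := ∑ j, ((b j).divisors.val) with hB
  have hsq : ∀ N : ℕ, ((-1 : ℤ[X]) ^ N) * ((-1) ^ N) = 1 := fun N => by
    rw [← mul_pow]; norm_num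
  -- basic facts about F A, F B
  have hFA : F A = ∏ i, ((X : ℤ[X]) ^ (a i) - 1) := by
    rw [hA, F_sum]; exact Finset.prod_congr rfl fun i _ => F_divisors (ha i)
  have hFB : F B = ∏ j, ((X : ℤ[X]) ^ (b j) - 1) := by
    rw [hB, F_sum]; exact Finset.prod_congr rfl fun j _ => F_divisors (hb j)
  have hprodA : (∏ i, (1 - X ^ (a i)) : ℤ[X]) = (-1) ^ m * F A := by
    rw [hFA, show ((-1 : ℤ[X]) ^ m) = ∏ _i : Fin m, (-1 : ℤ[X]) by
      rw [Finset.prod_const, Finset.card_univ, Fintype.card_fin],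
      ← Finset.prod_mul_distrib]
    exact Finset.prod_congr rfl fun i _ => by ring
  have hprodB : (∏ j, (1 - X ^ (b j)) : ℤ[X]) = (-1) ^ n * F B := by
    rw [hFB, show ((-1 : ℤ[X]) ^ n) = ∏ _j : Fin n, (-1 : ℤ[X]) by
      rw [Finset.prod_const, Finset.card_univ, Fintype.card_fin],
      ← Finset.prod_mul_distrib]
    exact Finset.prod_congr rfl fun i _ => by ring
  -- divisibility of cyclotomic products
  have hFdvd : F B ∣ F A := by
    have h1 : F B ∣ ∏ j, (1 - X ^ (b j) : ℤ[X]) := ⟨(-1) ^ n, by rw [hprodB]; ring⟩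
    have h2 : (∏ i, (1 - X ^ (a i) : ℤ[X])) ∣ F A :=
      ⟨(-1) ^ m, by
        rw [hprodA, mul_comm ((-1 : ℤ[X]) ^ m) (F A), mul_assoc, hsq m, mul_one]⟩
    exact (h1.trans hdvd).trans h2
  -- positivity of multiset elements
  have hposA : ∀ c ∈ A, 0 < c := by
    intro c hc
    obtain ⟨i, _, hi⟩ := mem_multiset_sum hc
    exact Nat.pos_of_mem_divisors hi
  have hposB : ∀ c ∈ B, 0 < c := by
    intro c hc
    obtain ⟨i, _, hi⟩ := mem_multiset_sum hc
    exact Nat.pos_of_mem_divisors hi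
  -- B ≤ A via unique factorization
  have ginj : Function.Injective (fun c : ℕ => Associates.mk (cyclotomic c ℤ)) := by
    intro c c' h
    have h' : Associated (cyclotomic c ℤ) (cyclotomic c' ℤ) :=
      Associates.mk_eq_mk_iff_associated.mp h
    exact cyclotomic_injective (R := ℤ)
      (eq_of_monic_of_associated (cyclotomic.monic _ _) (cyclotomic.monic _ _) h')
  have hle : B ≤ A := by
    rw [← Multiset.map_le_map_iff ginj]
    have hmk : ∀ s : Multiset ℕ,
        (s.map fun c : ℕ => Associates.mk (cyclotomic c ℤ)).prod = Associates.mk (F s) := by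
      intro s
      rw [show (s.map fun c : ℕ => Associates.mk (cyclotomic c ℤ))
          = (s.map fun c : ℕ => cyclotomic c ℤ).map Associates.mk by rw [Multiset.map_map]; rfl,
        Associates.prod_mk]
      rfl
    have hirr : ∀ (s : Multiset ℕ), (∀ c ∈ s, 0 < c) →
        ∀ x ∈ s.map fun c : ℕ => Associates.mk (cyclotomic c ℤ), Irreducible x := by
      intro s hs x hx
      obtain ⟨c, hc, rfl⟩ := Multiset.mem_map.mp hx
      exact (Associates.irreducible_mk).mpr (cyclotomic.irreducible (hs c hc))
    refine (Associates.prod_le_prod_iff_le (hirr B hposB) (hirr A hposA)).mp ?_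
    rw [hmk, hmk]
    exact Associates.mk_le_mk_iff_dvd.mpr hFdvd
  -- the geometric-sum blocks
  set G : Fin r → ℤ[X] :=
    fun t => ∑ i ∈ Finset.range (p t), ((X : ℤ[X]) ^ (p t ^ (k t - 1) * d t)) ^ i with hG
  have hblock : ∀ t, F ((d t).divisors.val.map fun d' => p t ^ k t * d') = G t := by
    intro t
    have h := block_eq_geom (hp t) (hd t) (hpd t) (k t - 1)
    rwa [Nat.sub_add_cancel (hk t)] at h
  set Q : ℤ[X] := ∏ t, G t with hQ
  -- decompose A
  have hAeq : A = (∑ t, ((d t).divisors.val.map fun d' => p t ^ k t * d')) + B := by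
    rw [← hEq]
    exact (tsub_add_cancel_of_le hle).symm
  have hFAQ : F A = Q * F B := by
    rw [hAeq, F_add, F_sum, hQ]
    congr 1
    exact Finset.prod_congr rfl fun t _ => hblock t
  -- Q has nonnegative coefficients
  have hGnn : ∀ t, ∀ j, 0 ≤ (G t).coeff j := by
    intro t j
    rw [hG, finset_sum_coeff]
    refine Finset.sum_nonneg fun i _ => ?_
    rw [← pow_mul, coeff_X_pow]
    split <;> norm_num
  have hQnn : ∀ j, 0 ≤ Q.coeff j := by
    rw [hQ]
    refine fun j => Finset.prod_induction G (fun f => ∀ j, 0 ≤ f.coeff j) ?_ ?_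
      (fun t _ => hGnn t) j
    · intro f g hf hg j
      rw [coeff_mul]
      exact Finset.sum_nonneg fun x _ => mul_nonneg (hf _) (hg _)
    · intro j
      rw [coeff_one]
      split <;> norm_num
  -- constant coefficients
  have hG0 : ∀ t, (G t).coeff 0 = 1 := by
    intro t
    have he : 0 < p t ^ (k t - 1) * d t :=
      Nat.mul_pos (Nat.pow_pos (hp t).pos) (hd t)
    rw [hG, finset_sum_coeff]
    rw [Finset.sum_eq_single 0]
    · simp
    · intro i _ hi
      rw [← pow_mul, coeff_X_pow]
      have : p t ^ (k t - 1) * d t * i ≠ 0 := Nat.mul_ne_zero he.ne' hi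
      rw [if_neg fun h => this h.symm]
    · intro h
      exact absurd (Finset.mem_range.mpr (hp t).pos) h
  have hQ0 : Q.coeff 0 = 1 := by
    have : Q.coeff 0 = ∏ t, (G t).coeff 0 := by
      simp only [hQ, coeff_zero_eq_eval_zero, eval_prod]
    rw [this]
    simp [hG0]
  have hP0 : P.coeff 0 = 1 := by
    have hcoeff := congrArg (fun f : ℤ[X] => f.coeff 0) hP
    simp only [mul_coeff_zero] at hcoeff
    have hb0 : (∏ j, (1 - X ^ (b j)) : ℤ[X]).coeff 0 = 1 := by
      rw [coeff_zero_eq_eval_zero, eval_prod]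
      refine Finset.prod_eq_one fun j _ => ?_
      simp [zero_pow (hb j).ne']
    have ha0 : (∏ i, (1 - X ^ (a i)) : ℤ[X]).coeff 0 = 1 := by
      rw [coeff_zero_eq_eval_zero, eval_prod]
      refine Finset.prod_eq_one fun i _ => ?_
      simp [zero_pow (ha i).ne']
    rw [hb0, ha0, mul_one] at hcoeff
    exact hcoeff
  -- F B is nonzero
  have hFBne : F B ≠ 0 := by
    rw [hFB]
    refine (monic_prod_of_monic _ _ fun j _ => ?_).ne_zero
    have := monic_X_pow_sub_C (1 : ℤ) (hb j).ne'
    rwa [map_one] at this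
  -- derive P = ± Q
  have hPQ : P * (-1) ^ n = (-1) ^ m * Q := by
    apply mul_right_cancel₀ hFBne
    have : P * ((-1) ^ n * F B) = (-1) ^ m * (Q * F B) := by
      rw [← hprodB, ← hFAQ, ← hprodA, hP]
    calc P * (-1) ^ n * F B = P * ((-1) ^ n * F B) := by ring
      _ = (-1) ^ m * (Q * F B) := this
      _ = (-1) ^ m * Q * F B := by ring
  have hP' : P = (-1) ^ (m + n) * Q := by
    calc P = P * ((-1 : ℤ[X]) ^ n * (-1) ^ n) := by rw [hsq]; ring
      _ = (P * (-1) ^ n) * (-1) ^ n := by ring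
      _ = ((-1) ^ m * Q) * (-1) ^ n := by rw [hPQ]
      _ = (-1) ^ (m + n) * Q := by rw [pow_add]; ring
  rcases Nat.even_or_odd (m + n) with hpar | hpar
  · rw [Even.neg_one_pow hpar, one_mul] at hP'
    rw [hP']
    exact hQnn j
  · exfalso
    rw [Odd.neg_one_pow hpar] at hP'
    have : P.coeff 0 = -1 := by
      rw [hP', neg_one_mul, coeff_neg, hQ0]
    rw [hP0] at this
    norm_num at this
end

section
/- Let m ≥ n ≥ 1 and let a_1,…,a_m and b_1,…,b_n be positive integers such that ∏_{j=1}^n (1−q^{b_j}) divides ∏_{i=1}^m (1−q^{a_i}) in ℤ[q], and let Δ denote the multiset difference (⨄_{i=1}^m D(a_i)) \ (⨄_{j=1}^n D(b_j)). Suppose Δ can be written as a multiset sum Δ = D_1 ⊎ … ⊎ D_r, where each D_t satisfies one of: (a) every element of D_t is a prime power p^e with e ≥ 1; or (b) D_t = [d, d·p] for some prime p and some d which is a prime power q'^e with q' prime and e ≥ 1. Then the unique polynomial P ∈ ℤ[q] with P·∏_{j=1}^n (1−q^{b_j}) = ∏_{i=1}^m (1−q^{a_i}) has all coefficients nonnegative.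 -/
open Polynomial

private lemma aux_nn_mul {p q : ℤ[X]} (hp : ∀ k, 0 ≤ p.coeff k) (hq : ∀ k, 0 ≤ q.coeff k) :
    ∀ k, 0 ≤ (p*q).coeff k := by
  intro k; rw [coeff_mul]; exact Finset.sum_nonneg fun x _ => mul_nonneg (hp _) (hq _)

private lemma aux_nn_one : ∀ k, 0 ≤ (1 : ℤ[X]).coeff k := by
  intro k; rw [coeff_one]; split_ifs <;> norm_num

private lemma aux_nn_ppow {p e : ℕ} (hp : p.Prime) (he : 1 ≤ e) :
    ∀ k, 0 ≤ (cyclotomic (p^e) ℤ).coeff k := by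
  obtain ⟨e, rfl⟩ := Nat.exists_eq_add_of_le he
  rw [add_comm, cyclotomic_prime_pow_eq_geom_sum hp]
  intro k
  rw [finset_sum_coeff]
  refine Finset.sum_nonneg fun i _ => ?_
  rw [← pow_mul, coeff_X_pow]
  split_ifs <;> norm_num

private lemma aux_nn_ppow_multiset (s : Multiset ℕ)
    (h : ∀ c ∈ s, ∃ p e : ℕ, p.Prime ∧ 1 ≤ e ∧ c = p^e) :
    ∀ k, 0 ≤ ((s.map (fun d => cyclotomic d ℤ)).prod).coeff k := by
  induction s using Multiset.induction with
  | empty => simpa using aux_nn_one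
  | cons c s ih =>
    rw [Multiset.map_cons, Multiset.prod_cons]
    obtain ⟨p, e, hp, he, rfl⟩ := h _ (Multiset.mem_cons_self c s)
    exact aux_nn_mul (aux_nn_ppow hp he) (ih fun c hc => h c (Multiset.mem_cons_of_mem hc))

private lemma aux_nn_pair {p q' e : ℕ} (hp : p.Prime) (hq : q'.Prime) (he : 1 ≤ e) :
    ∀ k, 0 ≤ ((({q'^e, q'^e*p} : Multiset ℕ).map (fun d => cyclotomic d ℤ)).prod).coeff k := by
  have hprod : ((({q'^e, q'^e*p} : Multiset ℕ).map (fun d => cyclotomic d ℤ)).prod)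
      = cyclotomic (q'^e) ℤ * cyclotomic (q'^e*p) ℤ := by
    simp [Multiset.prod_cons]
  rw [hprod]
  by_cases hpq : p = q'
  · subst hpq
    rw [show p^e * p = p^(e+1) by ring]
    exact aux_nn_mul (aux_nn_ppow hp he) (aux_nn_ppow hp (by omega))
  · have hdiv : ¬ p ∣ q'^e := fun h =>
      hpq ((Nat.prime_dvd_prime_iff_eq hp hq).mp (hp.dvd_of_dvd_pow h))
    rw [show cyclotomic (q'^e) ℤ * cyclotomic (q'^e*p) ℤ = expand ℤ p (cyclotomic (q'^e) ℤ) by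
      rw [cyclotomic_expand_eq_cyclotomic_mul hp hdiv, mul_comm]]
    intro k
    rw [Polynomial.coeff_expand hp.pos]
    split_ifs
    exacts [aux_nn_ppow hq he _, le_refl 0]

private lemma aux_prod_map_sum {ι : Type} (s : Finset ι) (g : ι → Multiset ℕ) (f : ℕ → ℤ[X]) :
    (((∑ i ∈ s, g i)).map f).prod = ∏ i ∈ s, ((g i).map f).prod := by
  classical
  induction s using Finset.cons_induction with
  | empty => simp
  | cons a s ha ih => rw [Finset.sum_cons, Finset.prod_cons, Multiset.map_add, Multiset.prod_add, ih]

private lemma aux_sign {n : ℕ} (b : Fin n → ℕ) :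
    (∏ j, (1 - X^(b j)) : ℤ[X]) = (-1)^n * ∏ j, (X^(b j) - 1) := by
  have h : ∀ j : Fin n, (1 - X^(b j) : ℤ[X]) = (-1) * (X^(b j) - 1) := fun j => by ring
  rw [Finset.prod_congr rfl fun j _ => h j, Finset.prod_mul_distrib, Finset.prod_const,
    Finset.card_univ, Fintype.card_fin]

private lemma aux_count_root' (c n : ℕ) (hn : 0 < n) (ζ : ℂ) (hζ : IsPrimitiveRoot ζ c) :
    Multiset.count ζ ((X^n - 1 : ℂ[X]).roots) = if c ∣ n then 1 else 0 := by
  have h1 : (X^n - 1 : ℂ[X]).roots = nthRoots n 1 := by rw [nthRoots, C_1]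
  obtain ⟨ξ, hξ⟩ : ∃ ξ : ℂ, IsPrimitiveRoot ξ n := ⟨_, Complex.isPrimitiveRoot_exp n hn.ne'⟩
  rw [h1, Multiset.count_eq_of_nodup (hξ.nthRoots_one_nodup)]
  simp only [mem_nthRoots hn, hζ.pow_eq_one_iff_dvd]

private lemma aux_count_div' (c n : ℕ) (hn : 0 < n) :
    Multiset.count c n.divisors.val = if c ∣ n then 1 else 0 := by
  rw [Multiset.count_eq_of_nodup n.divisors.nodup]
  simp [Nat.mem_divisors, hn.ne']

private lemma aux_count_roots_prod {m : ℕ} (a : Fin m → ℕ) (ha : ∀ i, 0 < a i)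
    (c : ℕ) (ζ : ℂ) (hζ : IsPrimitiveRoot ζ c) :
    Multiset.count ζ ((∏ i, (X^(a i) - 1 : ℂ[X])).roots) =
      Multiset.count c (∑ i, ((a i).divisors.val : Multiset ℕ)) := by
  have hne : ∀ i : Fin m, (X^(a i) - 1 : ℂ[X]) ≠ 0 := by
    intro i h
    have := congrArg (eval 0) h
    simp [zero_pow (ha i).ne'] at this
  have h1 : Multiset.count ζ ((∏ i, (X^(a i) - 1 : ℂ[X])).roots) =
      ∑ i, Multiset.count ζ ((X^(a i) - 1 : ℂ[X]).roots) := by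
    rw [roots_prod _ _ (Finset.prod_ne_zero_iff.mpr fun i _ => hne i), Multiset.count_bind]
    rfl
  rw [h1, Multiset.count_sum']
  exact Finset.sum_congr rfl fun i _ => by
    rw [aux_count_root' c (a i) (ha i) ζ hζ, aux_count_div' c (a i) (ha i)]

private lemma aux_le {m n : ℕ} (a : Fin m → ℕ) (b : Fin n → ℕ)
    (ha : ∀ i, 0 < a i) (hb : ∀ j, 0 < b j)
    (hdvd : (∏ j, (1 - X ^ (b j)) : ℤ[X]) ∣ ∏ i, (1 - X ^ (a i))) :
    (∑ j, ((b j).divisors.val : Multiset ℕ)) ≤ (∑ i, ((a i).divisors.val : Multiset ℕ)) := by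
  have h1 : (∏ j, (X^(b j) - 1) : ℤ[X]) ∣ ∏ i, (X^(a i) - 1) := by
    obtain ⟨P₀, hP₀⟩ := hdvd
    refine ⟨(-1)^m * (-1)^n * P₀, ?_⟩
    have ea := aux_sign a
    have eb := aux_sign b
    have : ((-1:ℤ[X])^m) * ((-1)^m * ∏ i, (X^(a i) - 1)) = (∏ i, (X^(a i) - 1)) := by
      rw [← mul_assoc, ← pow_add, Even.neg_one_pow ⟨m, by ring⟩, one_mul]
    rw [← this, ← ea, hP₀, eb]; ring
  have h2 : (∏ j, (X^(b j) - 1) : ℂ[X]) ∣ ∏ i, (X^(a i) - 1) := by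
    have := Polynomial.map_dvd (Int.castRingHom ℂ) h1
    simpa [Polynomial.map_prod] using this
  have hne : ∀ (k : ℕ), 0 < k → (X^k - 1 : ℂ[X]) ≠ 0 := by
    intro k hk h
    have := congrArg (eval 0) h
    simp [zero_pow hk.ne'] at this
  have hfne : (∏ i, (X^(a i) - 1 : ℂ[X])) ≠ 0 :=
    Finset.prod_ne_zero_iff.mpr fun i _ => hne _ (ha i)
  have hroots := Polynomial.roots.le_of_dvd hfne h2
  rw [Multiset.le_iff_count]
  intro c
  by_cases hcB0 : c ∈ (∑ j, ((b j).divisors.val : Multiset ℕ))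
  · have hc : 0 < c := by
      obtain ⟨j, _, hj⟩ := Multiset.mem_sum.mp hcB0
      exact Nat.pos_of_mem_divisors hj
    have hζ : IsPrimitiveRoot (Complex.exp (2 * Real.pi * Complex.I / c)) c :=
      Complex.isPrimitiveRoot_exp c hc.ne'
    have := Multiset.le_iff_count.mp hroots (Complex.exp (2 * Real.pi * Complex.I / c))
    rwa [aux_count_roots_prod a ha c _ hζ, aux_count_roots_prod b hb c _ hζ] at this
  · simp [Multiset.count_eq_zero.mpr hcB0]

/-- **Proposition 4.1(2).** Let `m ≥ n ≥ 1` and `a_1,…,a_m`, `b_1,…,b_n` be positive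
integers with `∏ⱼ (1 - q^{bⱼ}) ∣ ∏ᵢ (1 - q^{aᵢ})` in `ℤ[q]`. Let
`Δ = (⨄ᵢ D(aᵢ)) \ (⨄ⱼ D(bⱼ))` be the multiset difference of the divisor multisets.
If `Δ` is a multiset sum of multisets `D_t` such that each `D_t` either (a) consists
entirely of prime powers `p^e` with `e ≥ 1`, or (b) equals `[d, d·p]` for some prime `p`
and `d` a prime power, then the quotient polynomial has nonnegative coefficients. -/
theorem stmt_14 (m n : ℕ) (hn : 1 ≤ n) (hmn : n ≤ m) (a : Fin m → ℕ) (b : Fin n → ℕ)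
    (ha : ∀ i, 0 < a i) (hb : ∀ j, 0 < b j)
    (hdvd : (∏ j, (1 - X ^ (b j)) : ℤ[X]) ∣ ∏ i, (1 - X ^ (a i)))
    (hΔ : ∃ (r : ℕ) (D : Fin r → Multiset ℕ),
      ((∑ i, ((a i).divisors.val : Multiset ℕ)) - (∑ j, ((b j).divisors.val : Multiset ℕ)) =
        ∑ t, D t) ∧
      (∀ t, (∀ c ∈ D t, ∃ p e : ℕ, p.Prime ∧ 1 ≤ e ∧ c = p ^ e) ∨
        (∃ p q' e : ℕ, p.Prime ∧ q'.Prime ∧ 1 ≤ e ∧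
          D t = {q' ^ e, q' ^ e * p}))) :
    ∀ P : ℤ[X], P * ∏ j, (1 - X ^ (b j)) = ∏ i, (1 - X ^ (a i)) →
      ∀ j, 0 ≤ P.coeff j := by
  classical
  intro P hP k
  obtain ⟨r, D, hsum, hblocks⟩ := hΔ
  set Φ : ℕ → ℤ[X] := fun d => cyclotomic d ℤ with hΦ
  set A : Multiset ℕ := ∑ i, ((a i).divisors.val : Multiset ℕ) with hA
  set B : Multiset ℕ := ∑ j, ((b j).divisors.val : Multiset ℕ) with hB
  -- the blocks contain no 1's
  have hone : ∀ t, (1 : ℕ) ∉ D t := by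
    intro t h1
    have key : ∀ p e : ℕ, p.Prime → 1 ≤ e → (1 : ℕ) ≠ p ^ e := by
      intro p e hp he hcontra
      have h2 : 2 ≤ p := hp.two_le
      have : p ≤ p ^ e := Nat.le_self_pow (by omega) p
      omega
    rcases hblocks t with hcase | ⟨p, q', e, hp, hq, he, hDt⟩
    · obtain ⟨p, e, hp, he, hpe⟩ := hcase 1 h1
      exact key p e hp he hpe
    · rw [hDt] at h1
      rcases Multiset.mem_cons.mp h1 with h | h
      · exact key q' e hq he h
      · have h' := Multiset.mem_singleton.mp h
        have h2 : 2 ≤ q' := hq.two_le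
        have h3 : 2 ≤ p := hp.two_le
        have : q' ≤ q' ^ e := Nat.le_self_pow (by omega) q'
        nlinarith [h'.symm ▸ (rfl : q'^e*p = q'^e*p)]
  -- m = n
  have hcA : A.count 1 = m := by
    rw [hA, Multiset.count_sum', Finset.sum_congr rfl fun i _ => aux_count_div' 1 _ (ha i)]
    simp
  have hcB : B.count 1 = n := by
    rw [hB, Multiset.count_sum', Finset.sum_congr rfl fun j _ => aux_count_div' 1 _ (hb j)]
    simp
  have hΔ1 : (A - B).count 1 = 0 := by
    rw [hsum, Multiset.count_sum']
    exact Finset.sum_eq_zero fun t _ => Multiset.count_eq_zero.mpr (hone t)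
  have hmeqn : m = n := by
    have hsub := Multiset.count_sub 1 A B
    omega
  -- B ≤ A
  have hBA : B ≤ A := aux_le a b ha hb hdvd
  -- the product of cyclotomics over A (resp. B)
  have prodA : (A.map Φ).prod = ∏ i, (X^(a i) - 1 : ℤ[X]) := by
    rw [hA, aux_prod_map_sum]
    exact Finset.prod_congr rfl fun i _ => prod_cyclotomic_eq_X_pow_sub_one (ha i) ℤ
  have prodB : (B.map Φ).prod = ∏ j, (X^(b j) - 1 : ℤ[X]) := by
    rw [hB, aux_prod_map_sum]
    exact Finset.prod_congr rfl fun j _ => prod_cyclotomic_eq_X_pow_sub_one (hb j) ℤ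
  have hsplit : ((A - B).map Φ).prod * (B.map Φ).prod = (A.map Φ).prod := by
    rw [← Multiset.prod_add, ← Multiset.map_add, tsub_add_cancel_of_le hBA]
  -- identify P
  have hBne : (∏ j, (1 - X^(b j)) : ℤ[X]) ≠ 0 := by
    refine Finset.prod_ne_zero_iff.mpr fun j _ => fun h => ?_
    have := congrArg (eval 0) h
    simp [zero_pow (hb j).ne'] at this
  have hPeq : P = ((A - B).map Φ).prod := by
    apply mul_right_cancel₀ hBne
    rw [hP, aux_sign a, aux_sign b, ← prodA, ← prodB, ← hsplit, hmeqn]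
    ring
  -- nonnegativity
  rw [hPeq, hsum, aux_prod_map_sum]
  revert k
  refine Finset.prod_induction _ (fun p : ℤ[X] => ∀ k, 0 ≤ p.coeff k)
    (fun p q hp hq => aux_nn_mul hp hq) aux_nn_one fun t _ => ?_
  rcases hblocks t with hcase | ⟨p, q', e, hp, hq, he, hDt⟩
  · exact aux_nn_ppow_multiset _ hcase
  · rw [hDt]
    exact aux_nn_pair hp hq he
end

section
/- Let n_1,…,n_r be integers, each at least 2, and let f(x) = ∏_{i=1}^r Φ_{n_i}(x), a product of cyclotomic polynomials regarded as a polynomial with real coefficients. Then there exists a natural number k such that the polynomial f(x)·(1+x)^k has all coefficients nonnegative. -/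
open Polynomial Complex ComplexConjugate


lemma core_ineq (c u v : ℝ) (hu : 1 ≤ u) (hv : 1 ≤ v) (h2 : 2 ≤ (u + v - 2) * (1 - c)) :
    2 * c * (u * v) ≤ (u - 1) * u + (v - 1) * v := by
  rcases le_or_gt c 0 with hc0 | hc0
  · nlinarith [mul_nonneg (sub_nonneg.2 hu) (by linarith : (0:ℝ) ≤ u),
      mul_nonneg (sub_nonneg.2 hv) (by linarith : (0:ℝ) ≤ v),
      mul_nonneg (neg_nonneg.2 hc0) (mul_nonneg (by linarith : (0:ℝ) ≤ u) (by linarith : (0:ℝ) ≤ v))]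
  · have hw : 0 < 1 - c := by
      by_contra hh
      push_neg at hh
      nlinarith [mul_nonpos_of_nonneg_of_nonpos (by linarith : (0:ℝ) ≤ u + v - 2) hh]
    nlinarith [mul_nonneg (by linarith : (0:ℝ) ≤ 1 + c) (sq_nonneg (u - v)),
      mul_nonneg (by nlinarith : (0:ℝ) ≤ (1 - c) * (u + v) - 2) (by linarith : (0:ℝ) ≤ u + v)]

lemma key_ineq (c : ℝ) (hc : c < 1) (k : ℕ) (hk2 : 2 ≤ k) (hk : 2 ≤ (k : ℝ) * (1 - c)) (m : ℕ) :
    2 * c * (k.choose (m + 1)) ≤ (k.choose m : ℝ) + k.choose (m + 2) := by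
  rcases le_or_gt (m + 1) k with hm | hm
  · have hmk : m ≤ k := le_trans (Nat.le_succ m) hm
    have h1 : (k.choose (m + 1) : ℝ) * (m + 1) = (k.choose m : ℝ) * ((k - m : ℕ) : ℝ) := by
      exact_mod_cast Nat.choose_succ_right_eq k m
    have h2 : (k.choose (m + 2) : ℝ) * (m + 2) = (k.choose (m + 1) : ℝ) * ((k - (m + 1) : ℕ) : ℝ) := by
      exact_mod_cast Nat.choose_succ_right_eq k (m + 1)
    rw [Nat.cast_sub hmk] at h1
    rw [Nat.cast_sub hm] at h2
    push_cast at h1 h2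
    set u : ℝ := (m : ℝ) + 2 with hu
    set v : ℝ := (k : ℝ) - m with hv
    have hu1 : 1 ≤ u := by simp only [hu]; linarith [Nat.cast_nonneg (α := ℝ) m]
    have hv1 : 1 ≤ v := by
      have : (m : ℝ) + 1 ≤ k := by exact_mod_cast hm
      simp only [hv]; linarith
    have hcore := core_ineq c u v hu1 hv1 (by rw [hu, hv]; ring_nf; linarith)
    -- h1 : B * (m+1) = A * v ; rewrite in terms of u,v
    have hB : (0 : ℝ) < k.choose (m + 1) := by exact_mod_cast Nat.choose_pos hm
    have hA : (0 : ℝ) ≤ k.choose m := by positivity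
    have hD : (0 : ℝ) ≤ k.choose (m + 2) := by positivity
    have h1' : (k.choose (m + 1) : ℝ) * (u - 1) = (k.choose m : ℝ) * v := by
      rw [hu, hv]; convert h1 using 2 <;> ring
    have h2' : (k.choose (m + 2) : ℝ) * u = (k.choose (m + 1) : ℝ) * (v - 1) := by
      rw [hu, hv]; convert h2 using 2 <;> ring
    have huv : 0 < u * v := by positivity
    have big : 2 * c * (k.choose (m + 1)) * (u * v) ≤ ((k.choose m : ℝ) + k.choose (m + 2)) * (u * v) := by
      have e1 : (k.choose m : ℝ) * (u * v) = (k.choose (m + 1) : ℝ) * ((u - 1) * u) := by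
        nlinarith [h1']
      have e2 : (k.choose (m + 2) : ℝ) * (u * v) = (k.choose (m + 1) : ℝ) * ((v - 1) * v) := by
        nlinarith [h2']
      calc 2 * c * (k.choose (m + 1)) * (u * v) = (k.choose (m + 1) : ℝ) * (2 * c * (u * v)) := by ring
        _ ≤ (k.choose (m + 1) : ℝ) * ((u - 1) * u + (v - 1) * v) :=
            mul_le_mul_of_nonneg_left hcore hB.le
        _ = ((k.choose m : ℝ) + k.choose (m + 2)) * (u * v) := by rw [add_mul, e1, e2]; ring
    exact le_of_mul_le_mul_right big huv
  · rw [Nat.choose_eq_zero_of_lt hm]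
    have hA : (0 : ℝ) ≤ k.choose m := by positivity
    have hD : (0 : ℝ) ≤ k.choose (m + 2) := by positivity
    simp only [Nat.cast_zero, mul_zero]
    linarith

def GoodP (f : ℝ[X]) : Prop := ∃ k : ℕ, ∀ j, 0 ≤ (f * (X + 1) ^ k).coeff j

lemma quad_good (c : ℝ) (hc : c < 1) : GoodP (X ^ 2 - C (2 * c) * X + 1) := by
  have h1c : 0 < 1 - c := by linarith
  set k : ℕ := max 2 ⌈(2 : ℝ) / (1 - c)⌉₊ with hkdef
  have hk2 : 2 ≤ k := le_max_left _ _
  have hk : 2 ≤ (k : ℝ) * (1 - c) := by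
    have h1 : (2 : ℝ) / (1 - c) ≤ (⌈(2 : ℝ) / (1 - c)⌉₊ : ℝ) := Nat.le_ceil _
    have h2 : ((⌈(2 : ℝ) / (1 - c)⌉₊ : ℕ) : ℝ) ≤ (k : ℝ) := by
      exact_mod_cast le_max_right 2 ⌈(2 : ℝ) / (1 - c)⌉₊
    have h3 : (2 : ℝ) / (1 - c) ≤ (k : ℝ) := le_trans h1 h2
    calc (2 : ℝ) = 2 / (1 - c) * (1 - c) := by field_simp
      _ ≤ (k : ℝ) * (1 - c) := mul_le_mul_of_nonneg_right h3 h1c.le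
  refine ⟨k, ?_⟩
  intro j
  have expand : (X ^ 2 - C (2 * c) * X + 1) * (X + 1) ^ k
      = (X + 1) ^ k * X ^ 2 - C (2 * c) * ((X + 1) ^ k * X ^ 1) + (X + 1) ^ k := by ring
  rw [expand, coeff_add, coeff_sub, coeff_mul_X_pow', coeff_C_mul, coeff_mul_X_pow']
  simp only [coeff_X_add_one_pow]
  match j with
  | 0 => norm_num
  | 1 =>
      norm_num [Nat.choose_one_right]
      have : (2 : ℝ) ≤ (k : ℝ) := by exact_mod_cast hk2
      nlinarith
  | (m + 2) =>
      have e1 : (2 : ℕ) ≤ m + 2 := by omega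
      have e2 : (1 : ℕ) ≤ m + 2 := by omega
      rw [if_pos e1, if_pos e2]
      simp only [Nat.add_sub_cancel, show m + 2 - 1 = m + 1 from rfl]
      have := key_ineq c hc k hk2 hk m
      linarith


lemma coeffs_nonneg_mul {p q : ℝ[X]} (hp : ∀ j, 0 ≤ p.coeff j) (hq : ∀ j, 0 ≤ q.coeff j) :
    ∀ j, 0 ≤ (p * q).coeff j := by
  intro j
  rw [coeff_mul]
  exact Finset.sum_nonneg fun x _ => mul_nonneg (hp _) (hq _)

lemma good_mul {p q : ℝ[X]} (hp : GoodP p) (hq : GoodP q) : GoodP (p * q) := by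
  obtain ⟨a, ha⟩ := hp
  obtain ⟨b, hb⟩ := hq
  refine ⟨a + b, ?_⟩
  have e : p * q * (X + 1) ^ (a + b) = p * (X + 1) ^ a * (q * (X + 1) ^ b) := by
    rw [pow_add]; ring
  rw [e]
  exact coeffs_nonneg_mul ha hb

lemma good_one : GoodP 1 := by
  refine ⟨0, ?_⟩
  intro j
  simp only [pow_zero, mul_one, coeff_one]
  split <;> norm_num

lemma good_X_add_one : GoodP (X + 1 : ℝ[X]) := by
  refine ⟨0, ?_⟩
  intro j
  simp only [pow_zero, mul_one, coeff_add, coeff_one]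
  rcases j with _ | j <;> simp [coeff_X]
  split <;> norm_num

lemma divisor_good (n : ℕ) (hn : 2 ≤ n) :
    ∀ d : ℕ, ∀ f : ℝ[X], f.natDegree = d → f.Monic → f ∣ cyclotomic n ℝ → GoodP f := by
  intro d
  induction d using Nat.strong_induction_on with
  | _ d ih =>
    intro f hd hf hdvd
    rcases Nat.eq_zero_or_pos d with h0 | hpos
    · rw [h0] at hd
      rw [hf.natDegree_eq_zero.mp hd]
      exact good_one
    · have hf0 : f ≠ 0 := hf.ne_zero
      set F := f.map (algebraMap ℝ ℂ) with hF
      have hFdeg : F.natDegree = d := by rw [hF, hf.natDegree_map, hd]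
      have hFne : F ≠ 0 := by
        intro h; rw [h] at hFdeg; simp at hFdeg; omega
      have hFd0 : 0 < F.degree := by
        rw [degree_eq_natDegree hFne, hFdeg]
        exact_mod_cast hpos
      obtain ⟨z, hz⟩ := Complex.exists_root hFd0
      have hzaeval : aeval z f = 0 := by rwa [aeval_def, ← eval_map]
      haveI : NeZero ((n : ℂ)) := ⟨by exact_mod_cast (by omega : n ≠ 0)⟩
      have hzc : IsRoot (cyclotomic n ℂ) z := by
        refine IsRoot.dvd hz ?_
        rw [← map_cyclotomic n (algebraMap ℝ ℂ)]
        exact Polynomial.map_dvd _ hdvd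
      have hprim : IsPrimitiveRoot z n := isRoot_cyclotomic_iff.mp hzc
      have hpow : z ^ n = 1 := hprim.pow_eq_one
      have hz1 : z ≠ 1 := by
        intro h
        have := hprim.dvd_of_pow_eq_one 1 (by rw [h, one_pow])
        exact absurd (Nat.le_of_dvd one_pos this) (by omega)
      have hnorm : ‖z‖ = 1 := Complex.norm_eq_one_of_pow_eq_one hpow (by omega)
      have hns : normSq z = 1 := by
        rw [Complex.normSq_eq_norm_sq, hnorm]; norm_num
      rcases eq_or_ne z.im 0 with him | him
      · -- real root, must be -1
        have hzre : z = ((z.re : ℝ) : ℂ) := by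
          apply Complex.ext (by simp) (by simp [him])
        have hren : z.re ^ n = 1 := by
          have : ((z.re ^ n : ℝ) : ℂ) = ((1 : ℝ) : ℂ) := by
            push_cast
            rw [← hzre, hpow]
          exact_mod_cast this
        have habs : |z.re| = 1 := by
          have : ‖z‖ = 1 := by rw [hnorm]
          rw [hzre] at this
          rwa [Complex.norm_real, Real.norm_eq_abs] at this
        have hrem1 : z.re = -1 := by
          rcases abs_eq (by norm_num : (0:ℝ) ≤ 1) |>.mp habs with h1 | h1
          · exact absurd (by rw [hzre, h1]; norm_num : z = 1) hz1
          · exact h1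
        have hroot : f.IsRoot (-1 : ℝ) := by
          have h2 : algebraMap ℝ ℂ (f.eval (-1)) = 0 := by
            rw [← Polynomial.eval₂_at_apply (algebraMap ℝ ℂ) (-1), ← aeval_def]
            have hz' : algebraMap ℝ ℂ (-1) = z := by
              rw [hzre, hrem1]
              norm_num
            rw [hz', hzaeval]
          exact (algebraMap ℝ ℂ).injective (h2.trans (map_zero _).symm)
        have hdvd1 : (X + 1 : ℝ[X]) ∣ f := by
          have := dvd_iff_isRoot.2 hroot
          rwa [map_neg, map_one, sub_neg_eq_add] at this
        obtain ⟨g, hg⟩ := hdvd1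
        have hmx1 : (X + 1 : ℝ[X]).Monic := by
          have := monic_X_add_C (1 : ℝ)
          rwa [map_one] at this
        have hgm : g.Monic := hmx1.of_mul_monic_left (hg ▸ hf)
        have hx1deg : (X + 1 : ℝ[X]).natDegree = 1 := by
          simpa using natDegree_X_add_C (1 : ℝ)
        have hdeg : d = 1 + g.natDegree := by
          rw [← hd, hg, natDegree_mul hmx1.ne_zero hgm.ne_zero, hx1deg]
        have hgood : GoodP g :=
          ih g.natDegree (by omega) g rfl hgm
            (dvd_trans ⟨X + 1, by rw [hg]; ring⟩ hdvd)
        rw [hg]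
        exact good_mul good_X_add_one hgood
      · -- complex root, quadratic factor
        have hre1 : z.re < 1 := by
          have h' : z.re * z.re + z.im * z.im = 1 := by rw [← Complex.normSq_apply, hns]
          nlinarith [h', mul_self_pos.mpr him, sq_nonneg (z.re - 1), sq_nonneg (z.re + 1)]
        set q : ℝ[X] := X ^ 2 - C (2 * z.re) * X + 1 with hq
        have hconj : aeval (conj z) f = 0 := by
          rw [Polynomial.aeval_conj, hzaeval, map_zero]
        have hdz : (X - C z) ∣ F := dvd_iff_isRoot.2 hz
        have hdzc : (X - C (conj z)) ∣ F := by
          refine dvd_iff_isRoot.2 ?_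
          show F.eval (conj z) = 0
          rw [hF, eval_map, ← aeval_def, hconj]
        have hne : z - conj z ≠ 0 := by
          rw [sub_ne_zero]
          intro h
          exact him (Complex.conj_eq_iff_im.mp h.symm)
        have cop : IsCoprime (X - C z) (X - C (conj z)) :=
          isCoprime_X_sub_C_of_isUnit_sub (isUnit_iff_ne_zero.2 hne)
        have hmul : (X - C z) * (X - C (conj z)) ∣ F := cop.mul_dvd hdz hdzc
        have hmapq : q.map (algebraMap ℝ ℂ) = (X - C z) * (X - C (conj z)) := by
          have e : (X - C z) * (X - C (conj z))
              = X ^ 2 - C (z + conj z) * X + C (z * conj z) := by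
            rw [C_add, C_mul]; ring
          rw [e, Complex.add_conj, Complex.mul_conj, hns]
          simp only [hq, Polynomial.map_add, Polynomial.map_sub, Polynomial.map_mul,
            Polynomial.map_pow, Polynomial.map_one, map_C, map_X, Complex.coe_algebraMap,
            Complex.ofReal_one, map_one, Complex.ofReal_mul, Complex.ofReal_ofNat]
        have hqdvd : q ∣ f := by
          rw [← map_dvd_map' (algebraMap ℝ ℂ)]
          rw [hmapq]
          exact hmul
        have hqm : q.Monic := by
          have : q = X ^ 2 + (1 - C (2 * z.re) * X) := by rw [hq]; ring
          rw [this]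
          refine monic_X_pow_add ?_
          refine lt_of_le_of_lt (degree_sub_le _ _) ?_
          have h1 : (1 : ℝ[X]).degree ≤ 1 := by
            rw [degree_one]; exact zero_le_one
          have h2 : (C (2 * z.re) * X : ℝ[X]).degree ≤ 1 := by
            refine le_trans (degree_mul_le _ _) ?_
            have := degree_C_le (a := 2 * z.re) (R := ℝ)
            rw [degree_X]
            calc (C (2 * z.re) : ℝ[X]).degree + 1 ≤ 0 + 1 := by
                  exact add_le_add_left this 1
              _ = 1 := by norm_num
          exact lt_of_le_of_lt (max_le h1 h2) (by norm_num)
        obtain ⟨g, hg⟩ := hqdvd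
        have hgm : g.Monic := hqm.of_mul_monic_left (hg ▸ hf)
        have hqdeg : q.natDegree = 2 := by
          have : q = C 1 * X ^ 2 + C (-(2 * z.re)) * X + C 1 := by
            rw [hq]; simp only [map_neg, map_one]; ring
          rw [this, natDegree_quadratic one_ne_zero]
        have hdeg : d = 2 + g.natDegree := by
          rw [← hd, hg, natDegree_mul hqm.ne_zero hgm.ne_zero, hqdeg]
        have hgood : GoodP g :=
          ih g.natDegree (by omega) g rfl hgm
            (dvd_trans ⟨q, by rw [hg]; ring⟩ hdvd)
        rw [hg]
        exact good_mul (quad_good z.re hre1) hgood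


/-- **Corollary 4.7 (Pólya's theorem applied to cyclotomic products).** For a finite
product `f` of cyclotomic polynomials `Φ_{n_i}` with all `n_i ≥ 2`, there exists a
natural number `k` such that `f(x)·(1 + x)^k` has only nonnegative coefficients. -/
theorem stmt_18 (r : ℕ) (nn : Fin r → ℕ) (h : ∀ i, 2 ≤ nn i) :
    ∃ k : ℕ, ∀ j, 0 ≤ (((∏ i, cyclotomic (nn i) ℝ) * (1 + X) ^ k).coeff j) := by
  have hg : GoodP (∏ i, cyclotomic (nn i) ℝ) := by
    refine Finset.prod_induction _ GoodP (fun a b ha hb => good_mul ha hb) good_one ?_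
    intro i _
    exact divisor_good (nn i) (h i) (cyclotomic (nn i) ℝ).natDegree _ rfl
      (cyclotomic.monic _ _) dvd_rfl
  obtain ⟨k, hk⟩ := hg
  refine ⟨k, fun j => ?_⟩
  rw [show (1 + X : ℝ[X]) = X + 1 from add_comm _ _]
  exact hk j
end
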